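/- arXiv:2412.06579 — 4 statements merged into one kernel-verified Lean document; each statement's English description precedes it below -/
import Mathlib

section
/- Let F ⊂ ℝ^d be non-empty and compact, and let (F_n) be a sequence of non-empty compact sets converging to F in the Hausdorff metric. Suppose there exist a constant C > 0 and an unbounded sequence of natural numbers (m_n) such that for every n and every integer k with 0 ≤ k ≤ m_n, the number of dyadic cubes of side 2^{−k} meeting F_n is at least C·2^{ks}. Then the lower box dimension of F is at least s. -/
open Filter

/-- The closed dyadic cube in `ℝ^d` of side length `2^{-n}` indexed by `k : Fin d → ℤ`. -/
noncomputable def dyadicCube (d n : ℕ) (k : Fin d → ℤ) : Set (Fin d → ℝ) :=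
  {x | ∀ i, (k i : ℝ) / 2 ^ n ≤ x i ∧ x i ≤ ((k i : ℝ) + 1) / 2 ^ n}

/-- The number of dyadic cubes of side length `2^{-n}` meeting the set `K`. -/
noncomputable def dyadicCount (d n : ℕ) (K : Set (Fin d → ℝ)) : ℕ :=
  Set.ncard {k : Fin d → ℤ | (dyadicCube d n k ∩ K).Nonempty}

/-- The lower box dimension of a bounded set, computed via dyadic covering numbers. -/
noncomputable def lowerBoxDim (d : ℕ) (F : Set (Fin d → ℝ)) : ℝ :=
  Filter.liminf (fun n : ℕ => Real.log (dyadicCount d n F) / ((n : ℝ) * Real.log 2))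
    Filter.atTop

lemma hits_subset (d n : ℕ) (K : Set (Fin d → ℝ)) (R : ℝ)
    (hR : K ⊆ Metric.closedBall 0 R) :
    {k : Fin d → ℤ | (dyadicCube d n k ∩ K).Nonempty} ⊆
      ↑(Fintype.piFinset fun _ : Fin d => Finset.Icc (⌈-(2 ^ n * R) - 1⌉) ⌊(2:ℝ) ^ n * R⌋) := by
  rintro k ⟨x, hx, hxK⟩
  rw [Finset.mem_coe, Fintype.mem_piFinset]
  intro i
  have hpow : (0:ℝ) < 2 ^ n := by positivity
  have hxi : |x i| ≤ R := by
    have h1 := hR hxK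
    simp [Metric.mem_closedBall] at h1
    have h2 : |x i| ≤ ‖x‖ := by simpa [Real.norm_eq_abs] using norm_le_pi_norm x i
    exact h2.trans h1
  obtain ⟨hl, hu⟩ := hx i
  rw [abs_le] at hxi
  have hk1 : (k i : ℝ) ≤ 2 ^ n * R := by
    have : (k i : ℝ) ≤ 2 ^ n * x i := by rw [div_le_iff₀ hpow] at hl; linarith [hl]
    nlinarith
  have hk2 : -(2 ^ n * R) - 1 ≤ (k i : ℝ) := by
    have : 2 ^ n * x i ≤ (k i : ℝ) + 1 := by rw [le_div_iff₀ hpow] at hu; linarith [hu]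
    nlinarith
  rw [Finset.mem_Icc]
  exact ⟨Int.ceil_le.2 hk2, Int.le_floor.2 hk1⟩

lemma finite_hits (d n : ℕ) (K : Set (Fin d → ℝ)) (hK : Bornology.IsBounded K) :
    {k : Fin d → ℤ | (dyadicCube d n k ∩ K).Nonempty}.Finite := by
  obtain ⟨R, hR⟩ := hK.subset_closedBall 0
  exact Set.Finite.subset (Finset.finite_toSet _) (hits_subset d n K R hR)

lemma count_upper (d n : ℕ) (K : Set (Fin d → ℝ)) (R : ℝ) (hR0 : 0 ≤ R)
    (hR : K ⊆ Metric.closedBall 0 R) :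
    (dyadicCount d n K : ℝ) ≤ ((2:ℝ) ^ n * (2 * R + 3)) ^ d := by
  have hpow : (0:ℝ) < 2 ^ n := by positivity
  set lo : ℤ := ⌈-(2 ^ n * R) - 1⌉ with hlo
  set hi : ℤ := ⌊(2:ℝ) ^ n * R⌋ with hhi
  have h1 : dyadicCount d n K ≤ (Fintype.piFinset fun _ : Fin d => Finset.Icc lo hi).card := by
    rw [dyadicCount, ← Set.ncard_coe_finset]
    exact Set.ncard_le_ncard (hits_subset d n K R hR) (Finset.finite_toSet _)
  have h2 : (Fintype.piFinset fun _ : Fin d => Finset.Icc lo hi).card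
      = ((hi + 1 - lo).toNat) ^ d := by
    rw [Fintype.card_piFinset]
    rw [Finset.prod_congr rfl (fun i _ => Int.card_Icc _ _), Finset.prod_const]
    simp
  have h3 : (((hi + 1 - lo).toNat : ℤ) : ℝ) ≤ 2 ^ n * (2 * R + 3) := by
    have hb1 : (hi : ℝ) ≤ 2 ^ n * R := Int.floor_le _
    have hb2 : -(2 ^ n * R) - 1 ≤ (lo : ℝ) := Int.le_ceil _
    have hrhs : (0:ℝ) ≤ 2 ^ n * (2 * R + 3) := by positivity
    rcases le_or_gt (hi + 1 - lo) 0 with h | h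
    · rw [Int.toNat_of_nonpos h]; simpa using hrhs
    · rw [Int.toNat_of_nonneg h.le]
      have h2n : (1:ℝ) ≤ 2 ^ n := by exact_mod_cast Nat.one_le_two_pow (n := n)
      push_cast
      nlinarith [hb1, hb2, h2n]
  have h4 : ((hi + 1 - lo).toNat : ℝ) ≤ 2 ^ n * (2 * R + 3) := by exact_mod_cast h3
  calc (dyadicCount d n K : ℝ) ≤ (((hi + 1 - lo).toNat : ℕ) : ℝ) ^ d := by
        exact_mod_cast h1.trans_eq h2
  _ ≤ ((2:ℝ) ^ n * (2 * R + 3)) ^ d := by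
        exact pow_le_pow_left₀ (by positivity) h4 d

lemma count_comp (d n : ℕ) (K F : Set (Fin d → ℝ)) (hK : IsCompact K) (hKne : K.Nonempty)
    (hF : IsCompact F) (hFne : F.Nonempty)
    (hd : Metric.hausdorffDist K F < ((2:ℝ) ^ n)⁻¹) :
    dyadicCount d n K ≤ 3 ^ d * dyadicCount d n F := by
  have hedist := Metric.hausdorffEdist_ne_top_of_nonempty_of_bounded hKne hFne
    hK.isBounded hF.isBounded
  have hSF := finite_hits d n F hF.isBounded
  have hpow : (0:ℝ) < 2 ^ n := by positivity
  set TF := hSF.toFinset with hTF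
  set G : Finset (Fin d → ℤ) :=
    TF.biUnion (fun k' => Fintype.piFinset fun i => Finset.Icc (k' i - 1) (k' i + 1)) with hG
  have hsub : {k : Fin d → ℤ | (dyadicCube d n k ∩ K).Nonempty} ⊆ ↑G := by
    rintro k ⟨x, hx, hxK⟩
    obtain ⟨y, hyF, hxy⟩ := Metric.exists_dist_lt_of_hausdorffDist_lt hxK hd hedist
    set k' : Fin d → ℤ := fun i => ⌊(2:ℝ) ^ n * y i⌋ with hk'
    have hyc : y ∈ dyadicCube d n k' := by
      intro i
      constructor
      · rw [div_le_iff₀ hpow]; exact (Int.floor_le _).trans_eq (mul_comm _ _)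
      · rw [le_div_iff₀ hpow]
        have := (Int.lt_floor_add_one ((2:ℝ) ^ n * y i)).le
        push_cast
        linarith [this, mul_comm (x i) ((2:ℝ)^n)]
    have hk'F : k' ∈ TF := by
      rw [hTF, Set.Finite.mem_toFinset]
      exact ⟨y, hyc, hyF⟩
    rw [Finset.mem_coe, hG, Finset.mem_biUnion]
    refine ⟨k', hk'F, ?_⟩
    rw [Fintype.mem_piFinset]
    intro i
    have hdi : |x i - y i| < ((2:ℝ) ^ n)⁻¹ := by
      have h2 : dist (x i) (y i) ≤ dist x y := dist_le_pi_dist x y i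
      rw [Real.dist_eq] at h2
      linarith
    obtain ⟨hl, hu⟩ := hx i
    rw [div_le_iff₀ hpow] at hl
    rw [le_div_iff₀ hpow] at hu
    rw [abs_lt] at hdi
    have hprod1 : (k i : ℝ) ≤ 2 ^ n * x i := by linarith [hl]
    have hprod2 : 2 ^ n * x i ≤ (k i : ℝ) + 1 := by linarith [hu]
    have hgap : |2 ^ n * x i - 2 ^ n * y i| < 1 := by
      rw [abs_lt]
      constructor <;> nlinarith [hdi.1, hdi.2, (inv_mul_cancel₀ (ne_of_gt hpow))]
    rw [abs_lt] at hgap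
    rw [Finset.mem_Icc]
    constructor
    · -- k' i - 1 ≤ k i  i.e.  k' i ≤ k i + 1
      have h5 : ((2:ℝ) ^ n * y i) < ((k i + 2 : ℤ) : ℝ) := by push_cast; linarith
      have h6 : k' i < k i + 2 := Int.floor_lt.2 h5
      omega
    · -- k i ≤ k' i + 1
      have h5 : ((k i - 1 : ℤ) : ℝ) ≤ (2:ℝ) ^ n * y i := by push_cast; linarith
      have h6 : k i - 1 ≤ k' i := Int.le_floor.2 h5
      omega
  have h1 : dyadicCount d n K ≤ G.card := by
    rw [dyadicCount, ← Set.ncard_coe_finset G]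
    exact Set.ncard_le_ncard hsub G.finite_toSet
  have h2 : G.card ≤ TF.card * 3 ^ d := by
    refine (Finset.card_biUnion_le).trans ?_
    have := Finset.sum_le_card_nsmul TF
      (fun k' => (Fintype.piFinset fun i => Finset.Icc (k' i - 1) (k' i + 1)).card) (3 ^ d) ?_
    · simpa using this
    · intro k' _
      apply le_of_eq
      show (Fintype.piFinset fun i => Finset.Icc (k' i - 1) (k' i + 1)).card = 3 ^ d
      rw [Fintype.card_piFinset]
      rw [Finset.prod_congr rfl (fun i _ => Int.card_Icc _ _)]
      have h7 : ∀ i : Fin d, (k' i + 1 + 1 - (k' i - 1)).toNat = 3 := fun i => by omega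
      rw [Finset.prod_congr rfl (fun i _ => h7 i), Finset.prod_const]
      simp
  have h3 : TF.card = dyadicCount d n F := by
    rw [hTF, dyadicCount, Set.ncard_eq_toFinset_card _ hSF]
  calc dyadicCount d n K ≤ TF.card * 3 ^ d := h1.trans h2
  _ = 3 ^ d * dyadicCount d n F := by rw [h3, Nat.mul_comm]

theorem stmt2 (d : ℕ) (F : Set (Fin d → ℝ)) (hF : IsCompact F) (hFne : F.Nonempty)
    (Fn : ℕ → Set (Fin d → ℝ)) (hFnc : ∀ n, IsCompact (Fn n)) (hFnne : ∀ n, (Fn n).Nonempty)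
    (hconv : Tendsto (fun n => Metric.hausdorffDist (Fn n) F) atTop (nhds 0))
    (s : ℝ) (C : ℝ) (hC : 0 < C) (mn : ℕ → ℕ) (hmn : ∀ N : ℕ, ∃ n, N ≤ mn n)
    (hcount : ∀ n, ∀ j : ℕ, j ≤ mn n →
      C * (2 : ℝ) ^ ((j : ℝ) * s) ≤ (dyadicCount d j (Fn n) : ℝ)) :
    s ≤ lowerBoxDim d F := by
  have h3d : (0:ℝ) < 3 ^ d := by positivity
  set c : ℝ := C / 3 ^ d with hc
  have hcpos : 0 < c := by positivity
  have key : ∀ k : ℕ, c * 2 ^ ((k:ℝ) * s) ≤ (dyadicCount d k F : ℝ) := by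
    intro k
    have hev : ∀ᶠ n in atTop, Metric.hausdorffDist (Fn n) F < ((2:ℝ) ^ k)⁻¹ :=
      hconv.eventually (gt_mem_nhds (by positivity))
    obtain ⟨n₀, hn₀⟩ := eventually_atTop.1 hev
    obtain ⟨n, hn⟩ := hmn (max k ((Finset.range n₀).sup mn + 1))
    have hkn : k ≤ mn n := le_trans (le_max_left _ _) hn
    have hn₀n : n₀ ≤ n := by
      by_contra h
      push_neg at h
      have h8 : mn n ≤ (Finset.range n₀).sup mn := Finset.le_sup (Finset.mem_range.2 h)
      have h9 : (Finset.range n₀).sup mn + 1 ≤ mn n := le_trans (le_max_right _ _) hn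
      omega
    have h1 := hcount n k hkn
    have h2 := count_comp d k (Fn n) F (hFnc n) (hFnne n) hF hFne (hn₀ n hn₀n)
    have h3 : (dyadicCount d k (Fn n) : ℝ) ≤ 3 ^ d * dyadicCount d k F := by exact_mod_cast h2
    rw [hc, div_mul_eq_mul_div, div_le_iff₀ h3d]
    nlinarith [h1, h3]
  set a : ℕ → ℝ := fun n => Real.log (dyadicCount d n F) / ((n:ℝ) * Real.log 2) with ha
  set b : ℕ → ℝ := fun n => s + Real.log c / ((n:ℝ) * Real.log 2) with hbdef
  have hlog2 : (0:ℝ) < Real.log 2 := Real.log_pos one_lt_two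
  have hb : Tendsto b atTop (nhds s) := by
    have h1 : Tendsto (fun n : ℕ => (n:ℝ) * Real.log 2) atTop atTop :=
      tendsto_natCast_atTop_atTop.atTop_mul_const hlog2
    have h2 : Tendsto (fun n : ℕ => Real.log c / ((n:ℝ) * Real.log 2)) atTop (nhds 0) :=
      tendsto_const_nhds.div_atTop h1
    simpa using tendsto_const_nhds.add h2
  have hle : ∀ᶠ n in atTop, b n ≤ a n := by
    filter_upwards [eventually_ge_atTop 1] with n hn1
    have hnpos : (0:ℝ) < (n:ℝ) := by exact_mod_cast hn1
    have hden : (0:ℝ) < (n:ℝ) * Real.log 2 := mul_pos hnpos hlog2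
    have hNpos : (0:ℝ) < (dyadicCount d n F : ℝ) := lt_of_lt_of_le (by positivity) (key n)
    have hlogN : Real.log c + ((n:ℝ) * s) * Real.log 2 ≤ Real.log (dyadicCount d n F) := by
      have h4 := Real.log_le_log (by positivity) (key n)
      rwa [Real.log_mul (ne_of_gt hcpos) (by positivity), Real.log_rpow two_pos] at h4
    show s + Real.log c / ((n:ℝ) * Real.log 2) ≤
      Real.log (dyadicCount d n F) / ((n:ℝ) * Real.log 2)
    rw [le_div_iff₀ hden, add_mul, div_mul_cancel₀ _ (ne_of_gt hden)]
    nlinarith [hlogN]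
  have hbb : IsBoundedUnder (· ≥ ·) atTop b :=
    isBoundedUnder_of_eventually_ge (hb.eventually_const_le (by linarith : s - 1 < s))
  obtain ⟨R, hRF⟩ := hF.isBounded.subset_closedBall 0
  have hR0 : 0 ≤ R := by
    obtain ⟨x, hx⟩ := hFne
    have := hRF hx
    simp [Metric.mem_closedBall] at this
    exact le_trans (norm_nonneg x) this
  have hM1 : (1:ℝ) ≤ 2 * R + 3 := by linarith
  have hac : IsCoboundedUnder (· ≥ ·) atTop a := by
    apply isCoboundedUnder_ge_of_eventually_le atTop
      (x := (d:ℝ) + (d:ℝ) * Real.log (2 * R + 3) / Real.log 2)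
    filter_upwards [eventually_ge_atTop 1] with n hn1
    have hnpos : (0:ℝ) < (n:ℝ) := by exact_mod_cast hn1
    have hden : (0:ℝ) < (n:ℝ) * Real.log 2 := mul_pos hnpos hlog2
    have hNpos : (0:ℝ) < (dyadicCount d n F : ℝ) := lt_of_lt_of_le (by positivity) (key n)
    have hub := count_upper d n F R hR0 hRF
    have hlogub : Real.log (dyadicCount d n F)
        ≤ (d:ℝ) * ((n:ℝ) * Real.log 2) + (d:ℝ) * Real.log (2 * R + 3) := by
      have h5 := Real.log_le_log hNpos hub
      rw [Real.log_pow, Real.log_mul (by positivity) (by linarith),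
        Real.log_pow] at h5
      calc Real.log (dyadicCount d n F) ≤ _ := h5
      _ = (d:ℝ) * ((n:ℝ) * Real.log 2) + (d:ℝ) * Real.log (2 * R + 3) := by push_cast; ring
    have hlogM : 0 ≤ Real.log (2 * R + 3) := Real.log_nonneg hM1
    show Real.log (dyadicCount d n F) / ((n:ℝ) * Real.log 2)
      ≤ (d:ℝ) + (d:ℝ) * Real.log (2 * R + 3) / Real.log 2
    rw [div_le_iff₀ hden]
    have expand : ((d:ℝ) + (d:ℝ) * Real.log (2 * R + 3) / Real.log 2) * ((n:ℝ) * Real.log 2)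
        = (d:ℝ) * ((n:ℝ) * Real.log 2) + (d:ℝ) * Real.log (2 * R + 3) * (n:ℝ) := by
      field_simp
    rw [expand]
    have hge1 : (1:ℝ) ≤ (n:ℝ) := by exact_mod_cast hn1
    nlinarith [hlogub, hlogM, hge1,
      mul_nonneg (mul_nonneg (Nat.cast_nonneg d) hlogM) (sub_nonneg.2 hge1)]
  have hfin := Filter.liminf_le_liminf hle hbb hac
  rw [hb.liminf_eq] at hfin
  exact hfin
end

section
/- Let E be a subset of a line Y through the origin in ℝ² and let B ⊂ ℝ². If E is contained in the ε-neighbourhood of B (one-sided Hausdorff distance p_H(E;B) < ε), then for any invertible 2×2 matrix A, the set ‖A|Y‖·E_{AY} (the similar copy of E scaled by ‖A|Y‖ placed on the line AY) is contained in the (‖A‖ε)-neighbourhood of A(B), assuming A maps the unit direction of Y to the positive multiple of the unit direction of AY. -/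
/-- `E2` is the Euclidean plane. -/
abbrev E2 := EuclideanSpace ℝ (Fin 2)

theorem stmt9 (Y : Submodule ℝ E2) (hY : Module.finrank ℝ Y = 1)
    (E B : Set E2) (hEY : E ⊆ (Y : Set E2))
    (ε : ℝ) (hε : 0 < ε)
    -- `p_H(E;B) < ε`, i.e. `E` is contained in the `ε`-neighbourhood of `B`
    (hEB : E ⊆ Metric.thickening ε B)
    (A : E2 →L[ℝ] E2) (hA : Function.Bijective A)
    -- `e_Y` is the chosen unit vector of `Y`, `e_{AY}` the chosen unit vector of `AY`,
    -- and `A` maps `e_Y` to a positive multiple `c = ‖A|Y‖` of `e_{AY}`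
    (eY eAY : E2) (heY : eY ∈ Y) (heY1 : ‖eY‖ = 1) (heAY1 : ‖eAY‖ = 1)
    (c : ℝ) (hc : 0 < c) (hAc : A eY = c • eAY) :
    -- the set `‖A|Y‖ • E_{AY}` is contained in the `(‖A‖ε)`-neighbourhood of `A(B)`
    {p : E2 | ∃ x ∈ E, p = (c * (inner ℝ x eY : ℝ)) • eAY} ⊆
      Metric.thickening (‖A‖ * ε) (A '' B) := by
  rintro p ⟨x, hxE, rfl⟩
  -- Y is spanned by eY
  have heY0 : eY ≠ 0 := by
    intro h; rw [h, norm_zero] at heY1; norm_num at heY1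
  have hspan : Y = Submodule.span ℝ {eY} := by
    have hle : Submodule.span ℝ {eY} ≤ Y := by
      rw [Submodule.span_le, Set.singleton_subset_iff]; exact heY
    refine (Submodule.eq_of_le_of_finrank_le hle ?_).symm
    rw [hY, finrank_span_singleton heY0]
  have hx : ∃ t : ℝ, x = t • eY := by
    have := hEY hxE
    rw [hspan, SetLike.mem_coe, Submodule.mem_span_singleton] at this
    obtain ⟨t, ht⟩ := this
    exact ⟨t, ht.symm⟩
  obtain ⟨t, rfl⟩ := hx
  have hinner : (inner ℝ (t • eY) eY : ℝ) = t := by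
    rw [real_inner_smul_left, real_inner_self_eq_norm_sq, heY1]
    ring
  have hpt : (c * (inner ℝ (t • eY) eY : ℝ)) • eAY = A (t • eY) := by
    rw [hinner, map_smul, hAc, smul_smul, mul_comm]
  rw [hpt]
  -- x is ε-close to some b ∈ B
  obtain ⟨b, hbB, hdb⟩ := Metric.mem_thickening_iff.mp (hEB hxE)
  have hAnorm : 0 < ‖A‖ :=
    norm_pos_iff.mpr (by intro h0; exact heY0 (hA.injective (by simp [h0])))
  refine Metric.mem_thickening_iff.mpr ⟨A b, Set.mem_image_of_mem A hbB, ?_⟩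
  calc dist (A (t • eY)) (A b) ≤ ‖A‖ * dist (t • eY) b := by
        rw [dist_eq_norm, dist_eq_norm, ← map_sub]; exact A.le_opNorm _
    _ < ‖A‖ * ε := by exact mul_lt_mul_of_pos_left hdb hAnorm
end

section
/- Let K ⊂ ℝ^d be a non-empty compact set and let E be a coarse microset of K, i.e., there are expansion ratios λ_n ≥ 1, points x_n ∈ K, and a bi-Lipschitz map f: ℝ^d → ℝ^d with p_H(f(E); λ_n(K − x_n)) → 0. Then the Assouad dimension of K is at least the Assouad dimension of E. -/
set_option maxHeartbeats 1000000

open Filter Metric MeasureTheory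

/-- The smallest number of open balls of radius `r` needed to cover `E`. -/
noncomputable def coverNum {α : Type*} [PseudoMetricSpace α] (r : ℝ) (E : Set α) : ℕ :=
  sInf {n : ℕ | ∃ S : Finset α, S.card = n ∧ E ⊆ ⋃ x ∈ S, Metric.ball x r}

/-- The Assouad dimension of a bounded set. -/
noncomputable def assouadDim {α : Type*} [PseudoMetricSpace α] (F : Set α) : ℝ :=
  sInf {s : ℝ | 0 ≤ s ∧ ∃ C : ℝ, 0 < C ∧ ∀ x ∈ F, ∀ r R : ℝ, 0 < r → r ≤ R → R ≤ 1 →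
    (coverNum r (F ∩ Metric.ball x R) : ℝ) ≤ C * (R / r) ^ s}

lemma coverNum_le_card {α : Type*} [PseudoMetricSpace α] {r : ℝ} {E : Set α} (S : Finset α)
    (h : E ⊆ ⋃ x ∈ S, Metric.ball x r) : coverNum r E ≤ S.card :=
  Nat.sInf_le ⟨S, rfl, h⟩

lemma coverNum_spec {α : Type*} [PseudoMetricSpace α] {r : ℝ} {E : Set α}
    (h : ∃ S : Finset α, E ⊆ ⋃ x ∈ S, Metric.ball x r) :
    ∃ S : Finset α, S.card = coverNum r E ∧ E ⊆ ⋃ x ∈ S, Metric.ball x r := by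
  obtain ⟨S, hS⟩ := h
  have : coverNum r E ∈ {n : ℕ | ∃ S : Finset α, S.card = n ∧ E ⊆ ⋃ x ∈ S, Metric.ball x r} :=
    Nat.sInf_mem ⟨S.card, S, rfl, hS⟩
  exact this

lemma compact_cover {α : Type*} [PseudoMetricSpace α] {K A : Set α} (hK : IsCompact K)
    (hA : A ⊆ K) {ρ : ℝ} (hρ : 0 < ρ) :
    ∃ S : Finset α, A ⊆ ⋃ x ∈ S, Metric.ball x ρ := by
  obtain ⟨S, hS⟩ := hK.elim_finite_subcover (fun x : α => Metric.ball x ρ)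
    (fun x => isOpen_ball) (fun a _ => Set.mem_iUnion.2 ⟨a, mem_ball_self hρ⟩)
  exact ⟨S, hA.trans hS⟩

section Euclid

variable {d : ℕ}

local notation "ES" => EuclideanSpace ℝ (Fin d)

lemma sep_card_bound (x : ES) {R r : ℝ} (hr : 0 < r) (hrR : r ≤ R)
    (S : Finset ES) (hS : ↑S ⊆ Metric.ball x R)
    (hsep : ∀ p ∈ S, ∀ q ∈ S, p ≠ q → r ≤ dist p q) :
    (S.card : ℝ) ≤ (3 * R / r) ^ d := by
  have hR : 0 < R := hr.trans_le hrR
  rcases Nat.eq_zero_or_pos d with hd | hd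
  · subst hd
    have hsub : (S.card : ℝ) ≤ 1 := by
      have : S.card ≤ 1 := Finset.card_le_one.2 (fun a _ b _ => Subsingleton.elim a b)
      exact_mod_cast this
    simpa using hsub
  haveI : Nonempty (Fin d) := ⟨⟨0, hd⟩⟩
  haveI : Nontrivial ES := by
    refine ⟨0, EuclideanSpace.single ⟨0, hd⟩ 1, fun h => ?_⟩
    have := congrArg (fun v : ES => v ⟨0, hd⟩) h.symm
    simp [EuclideanSpace.single] at this
  have hdisj : (↑S : Set ES).PairwiseDisjoint (fun p => Metric.ball p (r / 2)) := by
    intro p hp q hq hpq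
    apply Metric.ball_disjoint_ball
    rw [add_halves]
    exact hsep p hp q hq hpq
  have hmeas : ∀ p ∈ S, MeasurableSet (Metric.ball p (r / 2)) :=
    fun p _ => measurableSet_ball
  have hUnion : (⋃ p ∈ S, Metric.ball p (r / 2)) ⊆ Metric.ball x (3 * R / 2) := by
    intro z hz
    simp only [Set.mem_iUnion] at hz
    obtain ⟨p, hp, hzp⟩ := hz
    have h1 : dist z p < r / 2 := mem_ball.1 hzp
    have h2 : dist p x < R := mem_ball.1 (hS hp)
    have := dist_triangle z p x
    have : dist z x < r / 2 + R := by linarith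
    refine mem_ball.2 (this.trans_le ?_)
    linarith
  have hvol := measure_mono hUnion (μ := volume)
  rw [measure_biUnion_finset hdisj hmeas] at hvol
  have hball : ∀ (c : ES) (ρ : ℝ), 0 ≤ ρ →
      volume (Metric.ball c ρ) = ENNReal.ofReal (ρ ^ d) * volume (Metric.ball (0 : ES) 1) := by
    intro c ρ hρ
    rw [Measure.addHaar_ball volume c hρ, finrank_euclideanSpace_fin]
  rw [Finset.sum_congr rfl (fun p _ => hball p (r/2) (by linarith)), Finset.sum_const,
    hball x (3*R/2) (by linarith), nsmul_eq_mul, ← mul_assoc] at hvol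
  have hb0 : volume (Metric.ball (0 : ES) 1) ≠ 0 := (measure_ball_pos volume _ one_pos).ne'
  have hbt : volume (Metric.ball (0 : ES) 1) ≠ ⊤ := measure_ball_lt_top.ne
  have hvol2 : (S.card : ENNReal) * ENNReal.ofReal ((r/2) ^ d) ≤ ENNReal.ofReal ((3*R/2) ^ d) :=
    (ENNReal.mul_le_mul_iff_left hb0 hbt).mp hvol
  have hrd : (0:ℝ) < (r/2)^d := by positivity
  have : ENNReal.ofReal ((S.card : ℝ) * (r/2)^d) ≤ ENNReal.ofReal ((3*R/2)^d) := by
    rw [ENNReal.ofReal_mul (by positivity)]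
    simpa using hvol2
  have hreal : (S.card : ℝ) * (r/2)^d ≤ (3*R/2)^d :=
    (ENNReal.ofReal_le_ofReal_iff (by positivity)).mp this
  have h3 : ((3*R/2) / (r/2)) ^ d = (3*R/r)^d := by
    congr 1
    field_simp
  calc (S.card : ℝ) ≤ (3*R/2)^d / (r/2)^d := (le_div_iff₀ hrd).2 hreal
    _ = (3*R/r)^d := by rw [← div_pow, h3]

lemma exists_good_cover (A : Set ES) (x : ES) {R r : ℝ} (hr : 0 < r) (hrR : r ≤ R)
    (hA : A ⊆ Metric.ball x R) :
    ∃ S : Finset ES, ↑S ⊆ A ∧ (A ⊆ ⋃ p ∈ S, Metric.ball p r) ∧ (S.card : ℝ) ≤ (3 * R / r) ^ d := by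
  classical
  set P : Finset ES → Prop := fun S => ↑S ⊆ A ∧ ∀ p ∈ S, ∀ q ∈ S, p ≠ q → r ≤ dist p q with hP
  have key : ∀ S, P S → (S.card : ℝ) ≤ (3 * R / r) ^ d := fun S hS =>
    sep_card_bound x hr hrR S (hS.1.trans hA) hS.2
  have keyN : ∀ S, P S → S.card ≤ ⌊(3 * R / r) ^ d⌋₊ := by
    intro S hS
    exact Nat.le_floor (key S hS)
  set cards := {n : ℕ | ∃ S : Finset ES, P S ∧ S.card = n} with hc
  have hne : cards.Nonempty := ⟨0, ∅, ⟨by simp, by simp⟩, rfl⟩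
  have hbdd : BddAbove cards := by
    refine ⟨⌊(3 * R / r) ^ d⌋₊, fun n hn => ?_⟩
    obtain ⟨S, hS, rfl⟩ := hn
    exact keyN S hS
  obtain ⟨S₀, hS₀, hcard⟩ : ∃ S : Finset ES, P S ∧ S.card = sSup cards := Nat.sSup_mem hne hbdd
  refine ⟨S₀, hS₀.1, ?_, key S₀ hS₀⟩
  intro a ha
  by_contra hcon
  simp only [Set.mem_iUnion, Metric.mem_ball, not_exists, not_lt] at hcon
  have haS : a ∉ S₀ := fun h => absurd (hcon a h) (by simpa using hr)
  have hins : P (insert a S₀) := by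
    constructor
    · intro z hz
      rcases Finset.mem_coe.1 hz |> Finset.mem_insert.1 with rfl | h
      · exact ha
      · exact hS₀.1 h
    · intro p hp q hq hpq
      rcases Finset.mem_insert.1 hp with rfl | hp' <;> rcases Finset.mem_insert.1 hq with rfl | hq'
      · exact absurd rfl hpq
      · exact hcon q hq'
      · rw [dist_comm]; exact hcon p hp'
      · exact hS₀.2 p hp' q hq' hpq
  have : (insert a S₀).card ≤ sSup cards := le_csSup hbdd ⟨_, hins, rfl⟩
  rw [Finset.card_insert_of_notMem haS, hcard] at this
  omega

end Euclid

theorem stmt10 (d : ℕ) (K E : Set (EuclideanSpace ℝ (Fin d)))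
    (hK : IsCompact K) (hKne : K.Nonempty) (hE : Bornology.IsBounded E)
    -- `E` is a coarse microset of `K`:
    (f : EuclideanSpace ℝ (Fin d) → EuclideanSpace ℝ (Fin d))
    (L : NNReal) (hL : 0 < L) (hlip : LipschitzWith L f) (hanti : AntilipschitzWith L f)
    (lam : ℕ → ℝ) (hlam : ∀ n, 1 ≤ lam n)
    (x : ℕ → EuclideanSpace ℝ (Fin d)) (hx : ∀ n, x n ∈ K)
    (δ : ℕ → ℝ) (hδpos : ∀ n, 0 < δ n) (hδ : Tendsto δ atTop (nhds 0))
    (happrox : ∀ n, f '' E ⊆ Metric.thickening (δ n) ((fun y => lam n • (y - x n)) '' K)) :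
    assouadDim E ≤ assouadDim K := by
  classical
  set SK := {s : ℝ | 0 ≤ s ∧ ∃ C : ℝ, 0 < C ∧ ∀ z ∈ K, ∀ r R : ℝ, 0 < r → r ≤ R → R ≤ 1 →
    (coverNum r (K ∩ Metric.ball z R) : ℝ) ≤ C * (R / r) ^ s} with hSK
  set SE := {s : ℝ | 0 ≤ s ∧ ∃ C : ℝ, 0 < C ∧ ∀ z ∈ E, ∀ r R : ℝ, 0 < r → r ≤ R → R ≤ 1 →
    (coverNum r (E ∩ Metric.ball z R) : ℝ) ≤ C * (R / r) ^ s} with hSE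
  -- SK is nonempty: Assouad dimension of K is at most d
  have hSKne : SK.Nonempty := by
    refine ⟨(d : ℝ), Nat.cast_nonneg d, (3:ℝ)^d, by positivity, ?_⟩
    intro z hz r R hr hrR hR1
    obtain ⟨S, -, hcov, hcard⟩ := exists_good_cover (K ∩ Metric.ball z R) z hr hrR
      Set.inter_subset_right
    refine (Nat.cast_le.2 (coverNum_le_card S hcov)).trans (hcard.trans ?_)
    have : (3 * R / r) ^ d = (3:ℝ)^d * (R / r) ^ d := by
      rw [mul_div_assoc, mul_pow]
    rw [this, Real.rpow_natCast]
  -- the key inclusion SK ⊆ SE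
  have hsub : SK ⊆ SE := by
    intro s hs
    obtain ⟨hs0, C, hC, hAss⟩ := hs
    set Λ : ℝ := max (L : ℝ) 1 with hΛ
    have hΛ1 : 1 ≤ Λ := le_max_right _ _
    have hΛ0 : (0:ℝ) < Λ := lt_of_lt_of_le one_pos hΛ1
    have hflip : ∀ p q : EuclideanSpace ℝ (Fin d), dist (f p) (f q) ≤ Λ * dist p q := by
      intro p q
      rw [hΛ]
      exact (hlip.dist_le_mul p q).trans
        (mul_le_mul_of_nonneg_right (le_max_left _ _) dist_nonneg)
    have hfanti : ∀ p q : EuclideanSpace ℝ (Fin d), dist p q ≤ Λ * dist (f p) (f q) := by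
      intro p q
      rw [hΛ]
      exact (hanti.le_mul_dist p q).trans
        (mul_le_mul_of_nonneg_right (le_max_left _ _) dist_nonneg)
    -- a fixed finite cover of K by unit balls centered in K
    obtain ⟨x0, hx0⟩ := hKne
    obtain ⟨R0, hR01, hKR0⟩ : ∃ R0 : ℝ, 1 < R0 ∧ K ⊆ Metric.ball x0 R0 :=
      hK.isBounded.subset_ball_lt 1 x0
    obtain ⟨T, hTK, hTcov, -⟩ := exists_good_cover K x0 one_pos hR01.le hKR0
    set M : ℕ := T.card with hM
    set c : ℝ := 24 * Λ ^ 2 with hc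
    have hc0 : (0:ℝ) < c := by positivity
    have hcs : (0:ℝ) < c ^ s := Real.rpow_pos_of_pos hc0 s
    refine ⟨hs0, C * (M + 1) * c ^ s, by positivity, ?_⟩
    intro z hz r R hr hrR hR1
    have hR : 0 < R := hr.trans_le hrR
    -- choose a scale n with δ n small
    obtain ⟨n, hn⟩ : ∃ n, δ n < r / (4 * Λ) :=
      (hδ.eventually_lt_const (by positivity)).exists
    have hlam1 : 1 ≤ lam n := hlam n
    have hlam0 : (0:ℝ) < lam n := lt_of_lt_of_le one_pos hlam1
    have hδ0 : 0 < δ n := hδpos n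
    set g : EuclideanSpace ℝ (Fin d) → EuclideanSpace ℝ (Fin d) := fun y => lam n • (y - x n) with hgdef
    have hg : ∀ a b : EuclideanSpace ℝ (Fin d), dist (g a) (g b) = lam n * dist a b := by
      intro a b
      have h1 : g a - g b = lam n • (a - b) := by
        show lam n • (a - x n) - lam n • (b - x n) = lam n • (a - b)
        rw [← smul_sub]
        congr 1
        abel
      rw [dist_eq_norm, h1, norm_smul, Real.norm_eq_abs, abs_of_pos hlam0, dist_eq_norm]
    -- the reference point k0 ∈ K
    have hfz : f z ∈ Metric.thickening (δ n) (g '' K) := happrox n ⟨z, hz, rfl⟩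
    obtain ⟨-, ⟨k0, hk0K, rfl⟩, hk0⟩ := Metric.mem_thickening_iff.1 hfz
    set r' : ℝ := r / (8 * Λ * lam n) with hr'def
    set R' : ℝ := (2 * Λ * R + 2 * δ n) / lam n with hR'def
    have hr'0 : 0 < r' := by positivity
    have hR'0 : 0 < R' := by positivity
    have hr'R' : r' ≤ R' := by
      rw [hr'def, hR'def, div_le_div_iff₀ (by positivity) hlam0]
      have e1 : r * lam n ≤ R * lam n := mul_le_mul_of_nonneg_right hrR hlam0.le
      have e2 : 1 ≤ Λ ^ 2 := by nlinarith
      have e3 : R * lam n * 1 ≤ R * lam n * (16 * Λ ^ 2) := by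
        have : (0:ℝ) ≤ R * lam n := by positivity
        nlinarith
      have e4 : (0:ℝ) ≤ 16 * Λ * δ n * lam n := by positivity
      nlinarith
    have hr'1 : r' ≤ 1 := by
      rw [hr'def, div_le_one (by positivity)]
      nlinarith
    have hlamr' : lam n * r' = r / (8 * Λ) := by
      rw [hr'def]
      field_simp
    -- key claim: images of points of E ∩ ball z R are δ-close to g of points of K ∩ ball k0 R'
    have hstar : ∀ p ∈ E ∩ Metric.ball z R, ∃ k ∈ K ∩ Metric.ball k0 R',
        dist (f p) (g k) < δ n := by
      rintro p ⟨hpE, hpz⟩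
      have hfp : f p ∈ Metric.thickening (δ n) (g '' K) := happrox n ⟨p, hpE, rfl⟩
      obtain ⟨-, ⟨k, hkK, rfl⟩, hk⟩ := Metric.mem_thickening_iff.1 hfp
      refine ⟨k, ⟨hkK, ?_⟩, hk⟩
      have h1 : dist (g k) (g k0) ≤ dist (g k) (f p) + dist (f p) (f z) + dist (f z) (g k0) :=
        dist_triangle4 _ _ _ _
      have h2 : dist (f p) (f z) ≤ Λ * dist p z := hflip p z
      have h3 : dist p z < R := mem_ball.1 hpz
      have h4 : Λ * dist p z ≤ Λ * R := by nlinarith [dist_nonneg (x := p) (y := z)]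
      have h5 : lam n * dist k k0 < 2 * Λ * R + 2 * δ n := by
        rw [← hg]
        rw [dist_comm (g k) (f p)] at h1
        nlinarith
      rw [mem_ball, hR'def, lt_div_iff₀ hlam0, mul_comm]
      exact h5
    -- obtain a suitable cover of K ∩ ball k0 R'
    have hcover : ∃ S : Finset (EuclideanSpace ℝ (Fin d)), (K ∩ Metric.ball k0 R' ⊆ ⋃ p ∈ S, Metric.ball p r') ∧
        (S.card : ℝ) ≤ C * (M + 1) * (R' / r') ^ s := by
      rcases le_or_gt R' 1 with hR'1 | hR'1
      · obtain ⟨S, hScard, hScov⟩ := coverNum_spec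
          (compact_cover hK Set.inter_subset_left hr'0)
        refine ⟨S, hScov, ?_⟩
        rw [hScard]
        have h1 := hAss k0 hk0K r' R' hr'0 hr'R' hR'1
        refine h1.trans ?_
        have hRr's : (0:ℝ) ≤ (R' / r') ^ s := (Real.rpow_pos_of_pos (by positivity) s).le
        nlinarith [Nat.cast_nonneg (α := ℝ) M]
      · -- large R': cover all of K using the unit cover T
        have hy : ∀ y : EuclideanSpace ℝ (Fin d), ∃ Sy : Finset (EuclideanSpace ℝ (Fin d)), y ∈ T →
            ((Sy.card : ℝ) ≤ C * (1 / r') ^ s ∧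
              K ∩ Metric.ball y 1 ⊆ ⋃ p ∈ Sy, Metric.ball p r') := by
          intro y
          by_cases hyT : y ∈ T
          · obtain ⟨Sy, hSycard, hSycov⟩ := coverNum_spec
              (compact_cover hK Set.inter_subset_left hr'0)
            refine ⟨Sy, fun _ => ⟨?_, hSycov⟩⟩
            rw [hSycard]
            exact hAss y (hTK hyT) r' 1 hr'0 hr'1 le_rfl
          · exact ⟨∅, fun h => absurd h hyT⟩
        choose Sy hSy using hy
        refine ⟨T.biUnion Sy, ?_, ?_⟩
        · rintro k ⟨hkK, -⟩
          obtain ⟨y, hyT, hky⟩ := Set.mem_iUnion₂.1 (hTcov hkK)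
          obtain ⟨p, hpS, hkp⟩ := Set.mem_iUnion₂.1 ((hSy y hyT).2 ⟨hkK, hky⟩)
          exact Set.mem_iUnion₂.2 ⟨p, Finset.mem_biUnion.2 ⟨y, hyT, hpS⟩, hkp⟩
        · have h1 : ((T.biUnion Sy).card : ℝ) ≤ (M : ℝ) * (C * (1 / r') ^ s) := by
            have h2 : (T.biUnion Sy).card ≤ ∑ y ∈ T, (Sy y).card := Finset.card_biUnion_le
            have h3 : ((T.biUnion Sy).card : ℝ) ≤ ∑ y ∈ T, ((Sy y).card : ℝ) := by
              exact_mod_cast h2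
            refine h3.trans ?_
            rw [hM]
            calc ∑ y ∈ T, ((Sy y).card : ℝ) ≤ ∑ _y ∈ T, C * (1 / r') ^ s :=
                  Finset.sum_le_sum (fun y hyT => (hSy y hyT).1)
              _ = (T.card : ℝ) * (C * (1 / r') ^ s) := by
                  rw [Finset.sum_const, nsmul_eq_mul]
          refine h1.trans ?_
          have h4 : (1 / r') ^ s ≤ (R' / r') ^ s :=
            Real.rpow_le_rpow (by positivity) (by gcongr) hs0
          calc (M : ℝ) * (C * (1 / r') ^ s) ≤ (M : ℝ) * (C * (R' / r') ^ s) := by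
                have hMC : (0:ℝ) ≤ (M : ℝ) * C := by positivity
                nlinarith
            _ ≤ ((M : ℝ) + 1) * (C * (R' / r') ^ s) := by
                have : (0:ℝ) ≤ C * (R' / r') ^ s := by positivity
                nlinarith
            _ = C * ((M : ℝ) + 1) * (R' / r') ^ s := by ring
    obtain ⟨S, hScov, hScard⟩ := hcover
    -- pull the cover back to E
    have hφsel : ∀ y : EuclideanSpace ℝ (Fin d), ∃ q : EuclideanSpace ℝ (Fin d),
        ((∃ p, p ∈ E ∩ Metric.ball z R ∧ dist (f p) (g y) < lam n * r' + δ n) →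
          q ∈ E ∩ Metric.ball z R ∧ dist (f q) (g y) < lam n * r' + δ n) := by
      intro y
      by_cases h : ∃ p, p ∈ E ∩ Metric.ball z R ∧ dist (f p) (g y) < lam n * r' + δ n
      · exact ⟨h.choose, fun _ => h.choose_spec⟩
      · exact ⟨z, fun hh => absurd hh h⟩
    choose φ hφ using hφsel
    have hEcov : E ∩ Metric.ball z R ⊆ ⋃ w ∈ S.image φ, Metric.ball w r := by
      intro p hp
      obtain ⟨k, ⟨hkK, hkball⟩, hfpk⟩ := hstar p hp
      obtain ⟨y, hyS, hky⟩ := Set.mem_iUnion₂.1 (hScov ⟨hkK, hkball⟩)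
      have hky' : dist k y < r' := mem_ball.1 hky
      have hfpy : dist (f p) (g y) < lam n * r' + δ n := by
        have := dist_triangle (f p) (g k) (g y)
        rw [hg] at this
        nlinarith
      have hφy := hφ y ⟨p, hp, hfpy⟩
      refine Set.mem_iUnion₂.2 ⟨φ y, Finset.mem_image_of_mem φ hyS, mem_ball.2 ?_⟩
      have h1 : dist p (φ y) ≤ Λ * dist (f p) (f (φ y)) := hfanti p (φ y)
      have h2 : dist (f p) (f (φ y)) ≤ dist (f p) (g y) + dist (g y) (f (φ y)) :=
        dist_triangle _ _ _
      rw [dist_comm (g y) (f (φ y))] at h2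
      have h3 : dist (f p) (f (φ y)) < 2 * (lam n * r' + δ n) := by
        have := hφy.2
        linarith
      have h4 : lam n * r' + δ n < r / (8 * Λ) + r / (4 * Λ) := by
        rw [hlamr']
        linarith
      have h5 : Λ * (2 * (r / (8 * Λ) + r / (4 * Λ))) = 3 * r / 4 := by
        field_simp
        ring
      calc dist p (φ y) ≤ Λ * dist (f p) (f (φ y)) := h1
        _ < Λ * (2 * (r / (8 * Λ) + r / (4 * Λ))) := by nlinarith
        _ = 3 * r / 4 := h5
        _ < r := by linarith
    -- conclude
    have hFinal : (coverNum r (E ∩ Metric.ball z R) : ℝ) ≤ (S.card : ℝ) := by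
      have h1 := coverNum_le_card (S.image φ) hEcov
      have h2 : (S.image φ).card ≤ S.card := Finset.card_image_le
      exact_mod_cast h1.trans h2
    refine hFinal.trans (hScard.trans ?_)
    have hratio : R' / r' ≤ c * (R / r) := by
      have h1 : R' / r' = 8 * Λ * (2 * Λ * R + 2 * δ n) / r := by
        rw [hR'def, hr'def]
        field_simp
      rw [h1, hc, div_le_iff₀ hr]
      have hsimp : 24 * Λ ^ 2 * (R / r) * r = 24 * Λ ^ 2 * R := by field_simp
      rw [hsimp]
      have h4 : 4 * Λ * δ n < r := by
        rw [lt_div_iff₀ (by positivity)] at hn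
        linarith
      have hΛsq : 1 ≤ Λ ^ 2 := by nlinarith
      nlinarith [mul_nonneg (sub_nonneg.2 hΛsq) hR.le]
    have hrp : (R' / r') ^ s ≤ c ^ s * (R / r) ^ s := by
      rw [← Real.mul_rpow hc0.le (by positivity)]
      exact Real.rpow_le_rpow (by positivity) hratio hs0
    have hM1 : (0:ℝ) ≤ C * (M + 1) := by positivity
    calc C * (↑M + 1) * (R' / r') ^ s ≤ C * (↑M + 1) * (c ^ s * (R / r) ^ s) := by nlinarith
      _ = C * (↑M + 1) * c ^ s * (R / r) ^ s := by ring
  -- conclude by comparing infima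
  have hbdd : BddBelow SE := ⟨0, fun s hs => hs.1⟩
  exact csInf_le_csInf hbdd hSKne hsub
end

section
/- Let 0 < α < β < 1, let (T_i)_{i∈I} with T_i(x,y) = (βx + b_i, αy + a_i) be an affine IFS on ℝ² satisfying T_i((0,1)²) ∩ T_j((0,1)²) = ∅ for i ≠ j, with attractor K, and let ν be the projection to the x-axis of the uniform self-affine measure μ (so μ(T_𝚒((0,1)²)) = m^{-k} for 𝚒 ∈ I^k, m = #I). If s is the Frostman dimension of ν, then for every ε > 0 there is a constant such that for all z in π(K) and 0 < r < 1, the r-covering number of the vertical tube of width 2r through z intersected with K is at most a constant times (1/r)^{log(mβ^{s−ε})/log(1/α)}. -/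
open MeasureTheory

/-- The Frostman dimension of a measure on `ℝ`:
`sup{t ≥ 0 : ∃ C, ∀ z r ∈ (0,1), ν(B(z,r)) ≤ C r^t}`. -/
noncomputable def frostmanDim (ν : Measure ℝ) : ℝ :=
  sSup {t : ℝ | 0 ≤ t ∧ ∃ C : ℝ, 0 < C ∧ ∀ z : ℝ, ∀ r : ℝ, 0 < r → r < 1 →
    (ν (Metric.ball z r)).toReal ≤ C * r ^ t}

open MeasureTheory Set Metric

namespace Stmt18Aux

noncomputable def Smap (α β : ℝ) (n : ℕ) (c d : ℝ) : ℝ × ℝ → ℝ × ℝ :=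
  fun p => (β ^ n * p.1 + c, α ^ n * p.2 + d)

noncomputable def cw {I : Type*} (β : ℝ) (b : I → ℝ) {n : ℕ} (w : Fin n → I) : ℝ :=
  ∑ k : Fin n, β ^ (k : ℕ) * b (w k)

def crect (α β : ℝ) (n : ℕ) (c d : ℝ) : Set (ℝ × ℝ) :=
  Set.Icc c (c + β ^ n) ×ˢ Set.Icc d (d + α ^ n)

def orect (α β : ℝ) (n : ℕ) (c d : ℝ) : Set (ℝ × ℝ) :=
  Set.Ioo c (c + β ^ n) ×ˢ Set.Ioo d (d + α ^ n)

lemma cw_cons {I : Type*} (β : ℝ) (b : I → ℝ) {n : ℕ} (i : I) (w : Fin n → I) :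
    cw β b (Fin.cons i w) = b i + β * cw β b w := by
  unfold cw
  rw [Fin.sum_univ_succ, Finset.mul_sum]
  simp only [Fin.cons_zero, Fin.cons_succ, Fin.val_zero, pow_zero, one_mul, Fin.val_succ]
  congr 1
  exact Finset.sum_congr rfl fun k _ => by ring

lemma cw_nonneg {I : Type*} {β : ℝ} (hβ : 0 ≤ β) {b : I → ℝ} (hb : ∀ i, 0 ≤ b i)
    {n : ℕ} (w : Fin n → I) : 0 ≤ cw β b w :=
  Finset.sum_nonneg fun k _ => mul_nonneg (pow_nonneg hβ _) (hb _)

lemma cw_le {I : Type*} {β : ℝ} (hβ0 : 0 < β) (hβ1 : β < 1) {b : I → ℝ}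
    (hb : ∀ i, b i ≤ 1 - β) {n : ℕ} (w : Fin n → I) : cw β b w ≤ 1 - β ^ n := by
  have h1 : cw β b w ≤ ∑ k : Fin n, β ^ (k : ℕ) * (1 - β) :=
    Finset.sum_le_sum fun k _ => by
      have := hb (w k)
      nlinarith [pow_pos hβ0 (k : ℕ)]
  have h2 : ∑ k : Fin n, β ^ (k : ℕ) * (1 - β) = (∑ k ∈ Finset.range n, β ^ k) * (1 - β) := by
    rw [Finset.sum_mul, Fin.sum_univ_eq_sum_range (fun k => β ^ k * (1 - β)) n]
  have h3 : (∑ k ∈ Finset.range n, β ^ k) = (β ^ n - 1) / (β - 1) :=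
    geom_sum_eq (by linarith) n
  have hβne : β - 1 ≠ 0 := by linarith
  rw [h2, h3] at h1
  calc cw β b w ≤ (β ^ n - 1) / (β - 1) * (1 - β) := h1
    _ = 1 - β ^ n := by field_simp; ring

/-- The attractor is contained in the unit square. -/
lemma attractor_subset {I : Type*} (α β : ℝ) (hα : 0 < α) (hαβ : α < β) (hβ : β < 1)
    (b a : I → ℝ) (hb : ∀ i, 0 ≤ b i ∧ b i ≤ 1 - β) (ha : ∀ i, 0 ≤ a i ∧ a i ≤ 1 - α)
    (T : I → ℝ × ℝ → ℝ × ℝ) (hT : ∀ i p, T i p = (β * p.1 + b i, α * p.2 + a i))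
    (K : Set (ℝ × ℝ)) (hK : IsCompact K) (hKne : K.Nonempty) (hKinv : K = ⋃ i, T i '' K) :
    K ⊆ Set.Icc 0 1 ×ˢ Set.Icc 0 1 := by
  have hβ0 : 0 < β := hα.trans hαβ
  have hα1 : α < 1 := hαβ.trans hβ
  have decomp : ∀ p ∈ K, ∃ i, ∃ q ∈ K, T i q = p := by
    intro p hp
    rw [hKinv] at hp
    obtain ⟨i, q, hq, hqe⟩ := Set.mem_iUnion.1 hp
    exact ⟨i, q, hq, hqe⟩
  have h1 : ∀ p ∈ K, p.1 ≤ 1 := by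
    obtain ⟨pM, hpM, hMax⟩ := hK.exists_isMaxOn hKne continuous_fst.continuousOn
    obtain ⟨i, q, hq, hqe⟩ := decomp pM hpM
    have h1 : pM.1 = β * q.1 + b i := by rw [← hqe, hT]
    have h2 : q.1 ≤ pM.1 := hMax hq
    have h3 : b i ≤ 1 - β := (hb i).2
    have hM1 : pM.1 ≤ 1 := by nlinarith
    exact fun p hp => le_trans (hMax hp) hM1
  have h2 : ∀ p ∈ K, 0 ≤ p.1 := by
    obtain ⟨pm, hpm, hMin⟩ := hK.exists_isMinOn hKne continuous_fst.continuousOn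
    obtain ⟨i, q, hq, hqe⟩ := decomp pm hpm
    have h1 : pm.1 = β * q.1 + b i := by rw [← hqe, hT]
    have h2 : pm.1 ≤ q.1 := hMin hq
    have h3 : 0 ≤ b i := (hb i).1
    have hm1 : 0 ≤ pm.1 := by nlinarith
    exact fun p hp => le_trans hm1 (hMin hp)
  have h3 : ∀ p ∈ K, p.2 ≤ 1 := by
    obtain ⟨pM, hpM, hMax⟩ := hK.exists_isMaxOn hKne continuous_snd.continuousOn
    obtain ⟨i, q, hq, hqe⟩ := decomp pM hpM
    have h1 : pM.2 = α * q.2 + a i := by rw [← hqe, hT]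
    have h2 : q.2 ≤ pM.2 := hMax hq
    have h3 : a i ≤ 1 - α := (ha i).2
    have hM1 : pM.2 ≤ 1 := by nlinarith
    exact fun p hp => le_trans (hMax hp) hM1
  have h4 : ∀ p ∈ K, 0 ≤ p.2 := by
    obtain ⟨pm, hpm, hMin⟩ := hK.exists_isMinOn hKne continuous_snd.continuousOn
    obtain ⟨i, q, hq, hqe⟩ := decomp pm hpm
    have h1 : pm.2 = α * q.2 + a i := by rw [← hqe, hT]
    have h2 : pm.2 ≤ q.2 := hMin hq
    have h3 : 0 ≤ a i := (ha i).1
    have hm1 : 0 ≤ pm.2 := by nlinarith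
    exact fun p hp => le_trans hm1 (hMin hp)
  intro p hp
  exact ⟨⟨h2 p hp, h1 p hp⟩, ⟨h4 p hp, h3 p hp⟩⟩


lemma orect_cons {I : Type*} {α β : ℝ} (hα : 0 < α) (hβ0 : 0 < β)
    (b a : I → ℝ) {n : ℕ} (i : I) (u : Fin n → I) :
    orect α β (n+1) (cw β b (Fin.cons i u)) (cw α a (Fin.cons i u)) =
    (fun q : ℝ × ℝ => (β * q.1 + b i, α * q.2 + a i)) ''
      orect α β n (cw β b u) (cw α a u) := by
  have hβn : (0:ℝ) < β ^ n := pow_pos hβ0 n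
  have hαn : (0:ℝ) < α ^ n := pow_pos hα n
  ext p
  simp only [orect, Set.mem_prod, Set.mem_Ioo, Set.mem_image, cw_cons, Prod.ext_iff]
  constructor
  · rintro ⟨⟨hx1, hx2⟩, hy1, hy2⟩
    refine ⟨((p.1 - b i)/β, (p.2 - a i)/α), ⟨⟨?_, ?_⟩, ?_, ?_⟩, ?_, ?_⟩
    · rw [lt_div_iff₀ hβ0]; linarith
    · rw [div_lt_iff₀ hβ0]; rw [pow_succ] at hx2; nlinarith
    · rw [lt_div_iff₀ hα]; linarith
    · rw [div_lt_iff₀ hα]; rw [pow_succ] at hy2; nlinarith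
    · field_simp
      ring
    · field_simp
      ring
  · rintro ⟨q, ⟨⟨hx1, hx2⟩, hy1, hy2⟩, hq1, hq2⟩
    rw [← hq1, ← hq2]
    constructor
    · constructor
      · nlinarith
      · rw [pow_succ]; nlinarith
    · constructor
      · nlinarith
      · rw [pow_succ]; nlinarith

lemma orect_subset_sq {I : Type*} {α β : ℝ} (hα : 0 < α) (hαβ : α < β) (hβ : β < 1)
    {b a : I → ℝ} (hb : ∀ i, 0 ≤ b i ∧ b i ≤ 1 - β) (ha : ∀ i, 0 ≤ a i ∧ a i ≤ 1 - α)
    {n : ℕ} (w : Fin n → I) :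
    orect α β n (cw β b w) (cw α a w) ⊆ Set.Ioo 0 1 ×ˢ Set.Ioo 0 1 := by
  have hβ0 : 0 < β := hα.trans hαβ
  have hα1 : α < 1 := hαβ.trans hβ
  have h1 : 0 ≤ cw β b w := cw_nonneg hβ0.le (fun i => (hb i).1) w
  have h2 : cw β b w ≤ 1 - β ^ n := cw_le hβ0 hβ (fun i => (hb i).2) w
  have h3 : 0 ≤ cw α a w := cw_nonneg hα.le (fun i => (ha i).1) w
  have h4 : cw α a w ≤ 1 - α ^ n := cw_le hα hα1 (fun i => (ha i).2) w
  rintro p ⟨⟨hx1, hx2⟩, hy1, hy2⟩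
  exact ⟨⟨by linarith, by linarith⟩, ⟨by linarith, by linarith⟩⟩

lemma orect_disjoint {I : Type*} {α β : ℝ} (hα : 0 < α) (hαβ : α < β) (hβ : β < 1)
    {b a : I → ℝ} (hb : ∀ i, 0 ≤ b i ∧ b i ≤ 1 - β) (ha : ∀ i, 0 ≤ a i ∧ a i ≤ 1 - α)
    (T : I → ℝ × ℝ → ℝ × ℝ) (hT : ∀ i p, T i p = (β * p.1 + b i, α * p.2 + a i))
    (hsep : ∀ i j, i ≠ j → Disjoint (T i '' (Set.Ioo (0:ℝ) 1 ×ˢ Set.Ioo (0:ℝ) 1))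
      (T j '' (Set.Ioo (0:ℝ) 1 ×ˢ Set.Ioo (0:ℝ) 1))) :
    ∀ (n : ℕ) (w w' : Fin n → I), w ≠ w' →
      Disjoint (orect α β n (cw β b w) (cw α a w)) (orect α β n (cw β b w') (cw α a w')) := by
  have hβ0 : 0 < β := hα.trans hαβ
  have hTeq : ∀ i (X : Set (ℝ × ℝ)),
      (fun q : ℝ × ℝ => (β * q.1 + b i, α * q.2 + a i)) '' X = T i '' X := by
    intro i X
    apply Set.image_congr
    intro q _
    rw [hT]
  have hTinj : ∀ i, Function.Injective (T i) := by
    intro i q q' h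
    rw [hT, hT] at h
    obtain ⟨h1, h2⟩ := Prod.ext_iff.1 h
    simp only at h1 h2
    have hq1 : q.1 = q'.1 := mul_left_cancel₀ (ne_of_gt hβ0) (by linarith)
    have hq2 : q.2 = q'.2 := mul_left_cancel₀ (ne_of_gt hα) (by linarith)
    exact Prod.ext hq1 hq2
  intro n
  induction n with
  | zero =>
    intro w w' hne
    exact absurd (funext fun k => k.elim0) hne
  | succ n ih =>
    intro w w' hne
    rw [← Fin.cons_self_tail w, ← Fin.cons_self_tail w', orect_cons hα hβ0, orect_cons hα hβ0,
      hTeq, hTeq]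
    by_cases hij : w 0 = w' 0
    · rw [hij]
      have htail : Fin.tail w ≠ Fin.tail w' := by
        intro h
        apply hne
        rw [← Fin.cons_self_tail w, ← Fin.cons_self_tail w', hij, h]
      rw [Set.disjoint_image_iff (hTinj (w' 0))]
      exact ih _ _ htail
    · exact Set.disjoint_of_subset
        (Set.image_mono (orect_subset_sq hα hαβ hβ hb ha _))
        (Set.image_mono (orect_subset_sq hα hαβ hβ hb ha _))
        (hsep _ _ hij)


/-- Any point lies in at most 9 closed cylinders of a given generation. -/
lemma mult_le_nine {I : Type*} {α β : ℝ} (hα : 0 < α) (hαβ : α < β) (hβ : β < 1)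
    {b a : I → ℝ} (hb : ∀ i, 0 ≤ b i ∧ b i ≤ 1 - β) (ha : ∀ i, 0 ≤ a i ∧ a i ≤ 1 - α)
    (T : I → ℝ × ℝ → ℝ × ℝ) (hT : ∀ i p, T i p = (β * p.1 + b i, α * p.2 + a i))
    (hsep : ∀ i j, i ≠ j → Disjoint (T i '' (Set.Ioo (0:ℝ) 1 ×ˢ Set.Ioo (0:ℝ) 1))
      (T j '' (Set.Ioo (0:ℝ) 1 ×ˢ Set.Ioo (0:ℝ) 1)))
    (n : ℕ) (p : ℝ × ℝ) (F : Finset (Fin n → I))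
    (hF : ∀ w ∈ F, p ∈ crect α β n (cw β b w) (cw α a w)) :
    F.card ≤ 9 := by
  classical
  have hβ0 : 0 < β := hα.trans hαβ
  have hβn : (0:ℝ) < β ^ n := pow_pos hβ0 n
  have hαn : (0:ℝ) < α ^ n := pow_pos hα n
  set cls : ℝ → ℝ → ℝ → ℕ := fun c X e => if c = X - e then 0 else if c = X then 1 else 2 with hcls
  have hclsne : ∀ (c c' X e : ℝ), 0 < e → c = X - e → c' = X → cls c X e ≠ cls c' X e := by
    intro c c' X e he h1 h2
    have g1 : cls c X e = 0 := by simp only [hcls]; rw [if_pos h1]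
    have g2 : cls c' X e = 1 := by
      simp only [hcls]
      rw [if_neg (by rw [h2]; intro hh; linarith), if_pos h2]
    rw [g1, g2]; exact (by norm_num)
  have hendpts : ∀ (c c' X e : ℝ), 0 < e → c ≤ X → X ≤ c + e → c' ≤ X → X ≤ c' + e →
      e ≤ |c' - c| → (c = X - e ∧ c' = X) ∨ (c = X ∧ c' = X - e) := by
    intro c c' X e he h1 h2 h3 h4 habs
    rcases le_abs.1 habs with h | h
    · left; constructor <;> linarith
    · right; constructor <;> linarith
  set f : (Fin n → I) → ℕ × ℕ := fun w =>
    (cls (cw β b w) p.1 (β ^ n), cls (cw α a w) p.2 (α ^ n)) with hf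
  have hmaps : ∀ w ∈ F, f w ∈ (({0,1,2} : Finset ℕ) ×ˢ ({0,1,2} : Finset ℕ)) := by
    intro w _
    simp only [hf, hcls, Finset.mem_product, Finset.mem_insert, Finset.mem_singleton]
    constructor <;> split_ifs <;> simp
  have hinj : Set.InjOn f F := by
    intro w hw w' hw' hfeq
    by_contra hne
    have hd := orect_disjoint hα hαβ hβ hb ha T hT hsep n w w' hne
    obtain ⟨⟨hc1, hc2⟩, hd1, hd2⟩ := hF w hw
    obtain ⟨⟨hc1', hc2'⟩, hd1', hd2'⟩ := hF w' hw'
    set c := cw β b w; set c' := cw β b w'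
    set d := cw α a w; set d' := cw α a w'
    have hcases : β ^ n ≤ |c' - c| ∨ α ^ n ≤ |d' - d| := by
      by_contra hcon
      push_neg at hcon
      obtain ⟨h1, h2⟩ := hcon
      rw [abs_lt] at h1 h2
      have e1 := le_max_left c c'; have e2 := le_max_right c c'
      have e3 := min_le_left (c + β ^ n) (c' + β ^ n)
      have e4 := min_le_right (c + β ^ n) (c' + β ^ n)
      have e5 := le_max_left d d'; have e6 := le_max_right d d'
      have e7 := min_le_left (d + α ^ n) (d' + α ^ n)
      have e8 := min_le_right (d + α ^ n) (d' + α ^ n)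
      have e9 : max c c' < min (c + β ^ n) (c' + β ^ n) := by
        apply max_lt <;> apply lt_min <;> linarith
      have e10 : max d d' < min (d + α ^ n) (d' + α ^ n) := by
        apply max_lt <;> apply lt_min <;> linarith
      refine Set.not_disjoint_iff.2 ⟨((max c c' + min (c + β ^ n) (c' + β ^ n)) / 2,
        (max d d' + min (d + α ^ n) (d' + α ^ n)) / 2), ?_, ?_⟩ hd <;>
        exact ⟨⟨by linarith, by linarith⟩, ⟨by linarith, by linarith⟩⟩
    rcases hcases with hcase | hcase
    · rcases hendpts c c' p.1 (β ^ n) hβn hc1 hc2 hc1' hc2' hcase with ⟨g1, g2⟩ | ⟨g1, g2⟩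
      · exact hclsne c c' p.1 (β ^ n) hβn g1 g2 (congrArg Prod.fst hfeq)
      · exact hclsne c' c p.1 (β ^ n) hβn g2 g1 (congrArg Prod.fst hfeq).symm
    · rcases hendpts d d' p.2 (α ^ n) hαn hd1 hd2 hd1' hd2' hcase with ⟨g1, g2⟩ | ⟨g1, g2⟩
      · exact hclsne d d' p.2 (α ^ n) hαn g1 g2 (congrArg Prod.snd hfeq)
      · exact hclsne d' d p.2 (α ^ n) hαn g2 g1 (congrArg Prod.snd hfeq).symm
  calc F.card ≤ ((({0,1,2} : Finset ℕ) ×ˢ ({0,1,2} : Finset ℕ))).card :=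
        Finset.card_le_card_of_injOn f hmaps hinj
    _ = 9 := by decide


lemma Smap_measurable (α β : ℝ) (n : ℕ) (c d : ℝ) : Measurable (Smap α β n c d) :=
  ((measurable_fst.const_mul _).add_const _).prodMk
    ((measurable_snd.const_mul _).add_const _)

lemma map_finset_sum {δ : Type*} {ι : Type*} [MeasurableSpace δ]
    (f : δ → δ) (hf : Measurable f) (s : Finset ι) (μs : ι → Measure δ) :
    Measure.map f (∑ i ∈ s, μs i) = ∑ i ∈ s, Measure.map f (μs i) := by
  induction s using Finset.cons_induction with
  | empty => simp
  | cons i s his ih =>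
    rw [Finset.sum_cons, Finset.sum_cons, Measure.map_add _ _ hf, ih]

lemma Smap_cons {I : Type*} (α β : ℝ) (b a : I → ℝ)
    (T : I → ℝ × ℝ → ℝ × ℝ) (hT : ∀ i p, T i p = (β * p.1 + b i, α * p.2 + a i))
    {n : ℕ} (i : I) (u : Fin n → I) :
    T i ∘ Smap α β n (cw β b u) (cw α a u) =
      Smap α β (n+1) (cw β b (Fin.cons i u)) (cw α a (Fin.cons i u)) := by
  funext p
  rw [Function.comp_apply, hT]
  simp only [Smap, cw_cons, Prod.ext_iff]
  constructor <;> ring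

/-- Iterated self-affinity: level-`n` representation of `μ`. -/
lemma rep {I : Type*} [Fintype I] (α β : ℝ) (b a : I → ℝ)
    (T : I → ℝ × ℝ → ℝ × ℝ) (hT : ∀ i p, T i p = (β * p.1 + b i, α * p.2 + a i))
    (μ : Measure (ℝ × ℝ))
    (hμ : μ = (Fintype.card I : ENNReal)⁻¹ • ∑ i : I, Measure.map (T i) μ) :
    ∀ n : ℕ, μ = ((Fintype.card I : ENNReal) ^ n)⁻¹ •
      ∑ w : Fin n → I, Measure.map (Smap α β n (cw β b w) (cw α a w)) μ := by
  have hTm : ∀ i, Measurable (T i) := by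
    intro i
    have : T i = fun p : ℝ × ℝ => (β * p.1 + b i, α * p.2 + a i) := funext fun p => hT i p
    rw [this]
    exact ((measurable_fst.const_mul _).add_const _).prodMk
      ((measurable_snd.const_mul _).add_const _)
  intro n
  induction n with
  | zero =>
    have h1 : ∀ w : Fin 0 → I, Smap α β 0 (cw β b w) (cw α a w) = id := by
      intro w
      funext p
      simp [Smap, cw]
    rw [Fintype.sum_unique (fun w : Fin 0 → I => Measure.map (Smap α β 0 (cw β b w) (cw α a w)) μ)]
    rw [h1, Measure.map_id, pow_zero, inv_one, one_smul]
  | succ n ih =>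
    have key : ∀ i : I, Measure.map (T i) μ =
        ((Fintype.card I : ENNReal) ^ n)⁻¹ •
          ∑ w : Fin n → I, Measure.map (Smap α β (n+1) (cw β b (Fin.cons i w)) (cw α a (Fin.cons i w))) μ := by
      intro i
      conv_lhs => rw [ih]
      rw [Measure.map_smul, map_finset_sum _ (hTm i)]
      congr 1
      apply Finset.sum_congr rfl
      intro w _
      rw [Measure.map_map (hTm i) (Smap_measurable α β n _ _), Smap_cons α β b a T hT]
    conv_lhs => rw [hμ]
    have h2 : ∑ i : I, Measure.map (T i) μ =
        ((Fintype.card I : ENNReal) ^ n)⁻¹ •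
          ∑ v : Fin (n+1) → I, Measure.map (Smap α β (n+1) (cw β b v) (cw α a v)) μ := by
      rw [Finset.sum_congr rfl (fun i _ => key i), ← Finset.smul_sum]
      congr 1
      rw [← Fintype.sum_prod_type']
      exact Fintype.sum_equiv (Fin.consEquiv (fun _ => I))
        (fun x => Measure.map (Smap α β (n+1) (cw β b (Fin.cons x.1 x.2)) (cw α a (Fin.cons x.1 x.2))) μ)
        (fun v => Measure.map (Smap α β (n+1) (cw β b v) (cw α a v)) μ)
        (fun x => rfl)
    rw [h2, smul_smul, pow_succ, ENNReal.mul_inv (by simp) (by simp), mul_comm]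


lemma Smap_mem_K {I : Type*} (α β : ℝ) (b a : I → ℝ)
    (T : I → ℝ × ℝ → ℝ × ℝ) (hT : ∀ i p, T i p = (β * p.1 + b i, α * p.2 + a i))
    (K : Set (ℝ × ℝ)) (hKinv : K = ⋃ i, T i '' K) :
    ∀ (n : ℕ) (w : Fin n → I) (p : ℝ × ℝ), p ∈ K →
      Smap α β n (cw β b w) (cw α a w) p ∈ K := by
  intro n
  induction n with
  | zero =>
    intro w p hp
    have : Smap α β 0 (cw β b w) (cw α a w) p = p := by simp [Smap, cw]
    rwa [this]
  | succ n ih =>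
    intro w p hp
    rw [← Fin.cons_self_tail w, ← Smap_cons α β b a T hT (w 0) (Fin.tail w),
      Function.comp_apply]
    have h1 : T (w 0) (Smap α β n (cw β b (Fin.tail w)) (cw α a (Fin.tail w)) p) ∈
        T (w 0) '' K := Set.mem_image_of_mem _ (ih (Fin.tail w) p hp)
    rw [hKinv]
    exact Set.mem_iUnion.2 ⟨w 0, h1⟩

lemma coverage {I : Type*} (α β : ℝ) (hα : 0 < α) (hαβ : α < β) (hβ : β < 1)
    (b a : I → ℝ) (hb : ∀ i, 0 ≤ b i ∧ b i ≤ 1 - β) (ha : ∀ i, 0 ≤ a i ∧ a i ≤ 1 - α)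
    (T : I → ℝ × ℝ → ℝ × ℝ) (hT : ∀ i p, T i p = (β * p.1 + b i, α * p.2 + a i))
    (K : Set (ℝ × ℝ)) (hK : IsCompact K) (hKne : K.Nonempty) (hKinv : K = ⋃ i, T i '' K) :
    ∀ n : ℕ, K ⊆ ⋃ w : Fin n → I, crect α β n (cw β b w) (cw α a w) := by
  have hβ0 : 0 < β := hα.trans hαβ
  have hsq := attractor_subset α β hα hαβ hβ b a hb ha T hT K hK hKne hKinv
  intro n
  induction n with
  | zero =>
    intro p hp
    refine Set.mem_iUnion.2 ⟨fun k => k.elim0, ?_⟩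
    have := hsq hp
    simp only [crect, cw, Set.mem_prod, Set.mem_Icc] at this ⊢
    simp only [Finset.univ_eq_empty, Finset.sum_empty, pow_zero]
    obtain ⟨⟨u1, u2⟩, u3, u4⟩ := this
    exact ⟨⟨by linarith, by linarith⟩, by linarith, by linarith⟩
  | succ n ih =>
    intro p hp
    rw [hKinv] at hp
    obtain ⟨i, hi⟩ := Set.mem_iUnion.1 hp
    obtain ⟨q, hq, hqe⟩ := hi
    obtain ⟨w, hw⟩ := Set.mem_iUnion.1 (ih hq)
    refine Set.mem_iUnion.2 ⟨Fin.cons i w, ?_⟩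
    simp only [crect, Set.mem_prod, Set.mem_Icc, cw_cons] at hw ⊢
    obtain ⟨⟨u1, u2⟩, u3, u4⟩ := hw
    rw [← hqe, hT]
    constructor
    · constructor
      · simp only; nlinarith
      · simp only [pow_succ]; nlinarith
    · constructor
      · simp only; nlinarith
      · simp only [pow_succ]; nlinarith


lemma Smap_contract {I : Type*} (α β : ℝ) (hα : 0 < α) (hαβ : α < β)
    (b a : I → ℝ) (T : I → ℝ × ℝ → ℝ × ℝ)
    (hT : ∀ i p, T i p = (β * p.1 + b i, α * p.2 + a i))
    (K : Set (ℝ × ℝ)) (hK : IsCompact K) (hKne : K.Nonempty) (hKinv : K = ⋃ i, T i '' K)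
    (n : ℕ) (w : Fin n → I) (p : ℝ × ℝ) :
    infDist (Smap α β n (cw β b w) (cw α a w) p) K ≤ β ^ n * infDist p K := by
  have hβ0 : 0 < β := hα.trans hαβ
  obtain ⟨q, hqK, hq⟩ := hK.exists_infDist_eq_dist hKne p
  have h1 : infDist (Smap α β n (cw β b w) (cw α a w) p) K ≤
      dist (Smap α β n (cw β b w) (cw α a w) p) (Smap α β n (cw β b w) (cw α a w) q) :=
    infDist_le_dist_of_mem (Smap_mem_K α β b a T hT K hKinv n w q hqK)
  have h2 : dist (Smap α β n (cw β b w) (cw α a w) p) (Smap α β n (cw β b w) (cw α a w) q) ≤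
      β ^ n * dist p q := by
    rw [Prod.dist_eq, Prod.dist_eq]
    simp only [Smap, Real.dist_eq]
    have e1 : β ^ n * p.1 + cw β b w - (β ^ n * q.1 + cw β b w) = β ^ n * (p.1 - q.1) := by ring
    have e2 : α ^ n * p.2 + cw α a w - (α ^ n * q.2 + cw α a w) = α ^ n * (p.2 - q.2) := by ring
    rw [e1, e2, abs_mul, abs_mul, abs_of_pos (pow_pos hβ0 n), abs_of_pos (pow_pos hα n)]
    apply max_le
    · exact mul_le_mul_of_nonneg_left (le_max_left _ _) (pow_nonneg hβ0.le n) |>.trans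
        (le_refl _)
    · calc α ^ n * |p.2 - q.2| ≤ β ^ n * |p.2 - q.2| :=
            mul_le_mul_of_nonneg_right (pow_le_pow_left₀ hα.le hαβ.le n) (abs_nonneg _)
        _ ≤ β ^ n * max |p.1 - q.1| |p.2 - q.2| :=
            mul_le_mul_of_nonneg_left (le_max_right _ _) (pow_nonneg hβ0.le n)
  calc infDist (Smap α β n (cw β b w) (cw α a w) p) K ≤ β ^ n * dist p q := h1.trans h2
    _ = β ^ n * infDist p K := by rw [hq]

lemma muK_eq_one {I : Type*} [Fintype I] [Nonempty I] (α β : ℝ)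
    (hα : 0 < α) (hαβ : α < β) (hβ : β < 1)
    (b a : I → ℝ) (T : I → ℝ × ℝ → ℝ × ℝ)
    (hT : ∀ i p, T i p = (β * p.1 + b i, α * p.2 + a i))
    (K : Set (ℝ × ℝ)) (hK : IsCompact K) (hKne : K.Nonempty) (hKinv : K = ⋃ i, T i '' K)
    (μ : Measure (ℝ × ℝ)) [IsProbabilityMeasure μ]
    (hμ : μ = (Fintype.card I : ENNReal)⁻¹ • ∑ i : I, Measure.map (T i) μ) :
    μ K = 1 := by
  have hβ0 : 0 < β := hα.trans hαβ
  have hcne : (Fintype.card I : ENNReal) ≠ 0 := by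
    simp [Fintype.card_ne_zero]
  have hVmeas : ∀ δ : ℝ, MeasurableSet {p : ℝ × ℝ | infDist p K < δ} :=
    fun δ => (isOpen_lt (continuous_infDist_pt K) continuous_const).measurableSet
  have key : ∀ δ : ℝ, 0 < δ → μ {p : ℝ × ℝ | infDist p K < δ} = 1 := by
    intro δ hδ
    have hstep : ∀ R : ℝ, 0 < R →
        μ {p : ℝ × ℝ | infDist p K < R} ≤ μ {p : ℝ × ℝ | infDist p K < δ} := by
      intro R hR
      obtain ⟨n, hn⟩ := exists_pow_lt_of_lt_one (div_pos hδ hR) hβ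
      have hβR : β ^ n * R < δ := (lt_div_iff₀ hR).1 hn
      have hsub : ∀ w : Fin n → I, {p : ℝ × ℝ | infDist p K < R} ⊆
          Smap α β n (cw β b w) (cw α a w) ⁻¹' {p : ℝ × ℝ | infDist p K < δ} := by
        intro w p hp
        simp only [Set.mem_preimage, Set.mem_setOf_eq] at hp ⊢
        calc infDist (Smap α β n (cw β b w) (cw α a w) p) K ≤ β ^ n * infDist p K :=
              Smap_contract α β hα hαβ b a T hT K hK hKne hKinv n w p
          _ ≤ β ^ n * R := mul_le_mul_of_nonneg_left hp.le (pow_nonneg hβ0.le n)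
          _ < δ := hβR
      have hrep := rep α β b a T hT μ hμ n
      have h1 : μ {p : ℝ × ℝ | infDist p K < δ} =
          ((Fintype.card I : ENNReal) ^ n)⁻¹ *
            ∑ w : Fin n → I, μ (Smap α β n (cw β b w) (cw α a w) ⁻¹' {p : ℝ × ℝ | infDist p K < δ}) := by
        conv_lhs => rw [hrep]
        rw [Measure.smul_apply, smul_eq_mul]
        congr 1
        rw [Measure.coe_finset_sum]
        simp only [Finset.sum_apply]
        exact Finset.sum_congr rfl fun w _ =>
          Measure.map_apply (Smap_measurable α β n _ _) (hVmeas δ)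
      rw [h1]
      have h2 : ∑ w : Fin n → I, μ {p : ℝ × ℝ | infDist p K < R} ≤
          ∑ w : Fin n → I, μ (Smap α β n (cw β b w) (cw α a w) ⁻¹' {p : ℝ × ℝ | infDist p K < δ}) :=
        Finset.sum_le_sum fun w _ => measure_mono (hsub w)
      have h3 : ∑ w : Fin n → I, μ {p : ℝ × ℝ | infDist p K < R} =
          (Fintype.card I : ENNReal) ^ n * μ {p : ℝ × ℝ | infDist p K < R} := by
        rw [Finset.sum_const, nsmul_eq_mul]
        congr 1
        rw [Finset.card_univ, Fintype.card_fun]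
        simp
      calc μ {p : ℝ × ℝ | infDist p K < R}
          = ((Fintype.card I : ENNReal) ^ n)⁻¹ *
            ((Fintype.card I : ENNReal) ^ n * μ {p : ℝ × ℝ | infDist p K < R}) := by
            rw [← mul_assoc, ENNReal.inv_mul_cancel (pow_ne_zero n hcne)
              (ENNReal.pow_ne_top (by simp)), one_mul]
        _ ≤ ((Fintype.card I : ENNReal) ^ n)⁻¹ *
            ∑ w : Fin n → I, μ (Smap α β n (cw β b w) (cw α a w) ⁻¹' {p : ℝ × ℝ | infDist p K < δ}) := by
            apply mul_le_mul_right
            rw [← h3]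
            exact h2
    have huniv : (⋃ j : ℕ, {p : ℝ × ℝ | infDist p K < (j : ℝ) + 1}) = Set.univ := by
      ext p
      simp only [Set.mem_iUnion, Set.mem_setOf_eq, Set.mem_univ, iff_true]
      obtain ⟨j, hj⟩ := exists_nat_gt (infDist p K)
      exact ⟨j, by linarith⟩
    have hmono : Monotone fun j : ℕ => {p : ℝ × ℝ | infDist p K < (j : ℝ) + 1} := by
      intro j j' hjj p hp
      simp only [Set.mem_setOf_eq] at hp ⊢
      have : (j : ℝ) ≤ (j' : ℝ) := Nat.cast_le.2 hjj
      linarith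
    have h4 : (1 : ENNReal) = ⨆ j : ℕ, μ {p : ℝ × ℝ | infDist p K < (j : ℝ) + 1} := by
      rw [← hmono.directed_le.measure_iUnion, huniv, measure_univ]
    have h5 : (1 : ENNReal) ≤ μ {p : ℝ × ℝ | infDist p K < δ} := by
      rw [h4]
      exact iSup_le fun j => hstep ((j : ℝ) + 1) (by positivity)
    exact le_antisymm prob_le_one h5
  -- now conclude μ K = 1
  have hcompl : μ Kᶜ = 0 := by
    have hsub : Kᶜ ⊆ ⋃ k : ℕ, {p : ℝ × ℝ | infDist p K < 1 / ((k : ℝ) + 1)}ᶜ := by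
      intro p hp
      have hne : infDist p K ≠ 0 := by
        intro h0
        exact hp ((hK.isClosed.mem_iff_infDist_zero hKne).2 h0)
      have hpos : 0 < infDist p K := lt_of_le_of_ne (infDist_nonneg) (Ne.symm hne)
      obtain ⟨k, hk⟩ := exists_nat_one_div_lt hpos
      refine Set.mem_iUnion.2 ⟨k, ?_⟩
      simp only [Set.mem_compl_iff, Set.mem_setOf_eq, not_lt]
      exact hk.le
    refine measure_mono_null hsub (measure_iUnion_null fun k => ?_)
    rw [measure_compl (hVmeas _) (measure_ne_top μ _), measure_univ,
      key (1 / ((k : ℝ) + 1)) (by positivity), tsub_self]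
  have := measure_add_measure_compl (hK.isClosed.measurableSet) (μ := μ)
  rw [hcompl, add_zero, measure_univ] at this
  exact this

lemma mu_crect {I : Type*} [Fintype I] [Nonempty I] (α β : ℝ)
    (hα : 0 < α) (hαβ : α < β) (hβ : β < 1)
    (b a : I → ℝ) (T : I → ℝ × ℝ → ℝ × ℝ)
    (hT : ∀ i p, T i p = (β * p.1 + b i, α * p.2 + a i))
    (K : Set (ℝ × ℝ)) (hsq : K ⊆ Set.Icc 0 1 ×ˢ Set.Icc 0 1) (hμK : _root_.id True)
    (μ : Measure (ℝ × ℝ)) [IsProbabilityMeasure μ]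
    (hμ : μ = (Fintype.card I : ENNReal)⁻¹ • ∑ i : I, Measure.map (T i) μ)
    (hμK1 : μ K = 1)
    (n : ℕ) (w : Fin n → I) :
    ((Fintype.card I : ENNReal) ^ n)⁻¹ ≤ μ (crect α β n (cw β b w) (cw α a w)) := by
  have hβ0 : 0 < β := hα.trans hαβ
  have hrep := rep α β b a T hT μ hμ n
  have hmeas : MeasurableSet (crect α β n (cw β b w) (cw α a w)) :=
    measurableSet_Icc.prod measurableSet_Icc
  have h1 : μ (crect α β n (cw β b w) (cw α a w)) =
      ((Fintype.card I : ENNReal) ^ n)⁻¹ *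
        ∑ w' : Fin n → I, μ (Smap α β n (cw β b w') (cw α a w') ⁻¹' crect α β n (cw β b w) (cw α a w)) := by
    conv_lhs => rw [hrep]
    rw [Measure.smul_apply, smul_eq_mul]
    congr 1
    rw [Measure.coe_finset_sum]
    simp only [Finset.sum_apply]
    exact Finset.sum_congr rfl fun w' _ =>
      Measure.map_apply (Smap_measurable α β n _ _) hmeas
  have h2 : K ⊆ Smap α β n (cw β b w) (cw α a w) ⁻¹' crect α β n (cw β b w) (cw α a w) := by
    intro p hp
    obtain ⟨⟨u1, u2⟩, u3, u4⟩ := hsq hp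
    simp only [Set.mem_preimage, Smap, crect, Set.mem_prod, Set.mem_Icc]
    have hβn : (0:ℝ) < β ^ n := pow_pos hβ0 n
    have hαn : (0:ℝ) < α ^ n := pow_pos hα n
    constructor
    · constructor <;> nlinarith
    · constructor <;> nlinarith
  have h3 : (1 : ENNReal) ≤
      μ (Smap α β n (cw β b w) (cw α a w) ⁻¹' crect α β n (cw β b w) (cw α a w)) := by
    rw [← hμK1]
    exact measure_mono h2
  rw [h1]
  calc ((Fintype.card I : ENNReal) ^ n)⁻¹ = ((Fintype.card I : ENNReal) ^ n)⁻¹ * 1 := by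
        rw [mul_one]
    _ ≤ _ := by
      apply mul_le_mul_right
      exact h3.trans (Finset.single_le_sum
        (f := fun w' : Fin n → I =>
          μ (Smap α β n (cw β b w') (cw α a w') ⁻¹' crect α β n (cw β b w) (cw α a w)))
        (fun w' _ => zero_le) (Finset.mem_univ w))


lemma card_W_le {I : Type*} [Fintype I] [Nonempty I] (α β : ℝ)
    (hα : 0 < α) (hαβ : α < β) (hβ : β < 1)
    (b a : I → ℝ) (hb : ∀ i, 0 ≤ b i ∧ b i ≤ 1 - β) (ha : ∀ i, 0 ≤ a i ∧ a i ≤ 1 - α)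
    (T : I → ℝ × ℝ → ℝ × ℝ) (hT : ∀ i p, T i p = (β * p.1 + b i, α * p.2 + a i))
    (hsep : ∀ i j, i ≠ j → Disjoint (T i '' (Set.Ioo (0:ℝ) 1 ×ˢ Set.Ioo (0:ℝ) 1))
      (T j '' (Set.Ioo (0:ℝ) 1 ×ˢ Set.Ioo (0:ℝ) 1)))
    (K : Set (ℝ × ℝ)) (hsq : K ⊆ Set.Icc 0 1 ×ˢ Set.Icc 0 1)
    (μ : Measure (ℝ × ℝ)) [IsProbabilityMeasure μ]
    (hμ : μ = (Fintype.card I : ENNReal)⁻¹ • ∑ i : I, Measure.map (T i) μ)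
    (hμK1 : μ K = 1)
    (n : ℕ) (z r : ℝ) (W : Finset (Fin n → I))
    (hW : ∀ w ∈ W, (Prod.fst ⁻¹' Metric.ball z r ∩ crect α β n (cw β b w) (cw α a w)).Nonempty) :
    (W.card : ENNReal) ≤ 9 * (Fintype.card I : ENNReal) ^ n *
      μ (Prod.fst ⁻¹' Metric.ball z (r + β ^ n)) := by
  classical
  have hβ0 : 0 < β := hα.trans hαβ
  set ρ := r + β ^ n with hρdef
  have hmeasC : ∀ w : Fin n → I, MeasurableSet (crect α β n (cw β b w) (cw α a w)) :=
    fun w => measurableSet_Icc.prod measurableSet_Icc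
  have hmeasT : MeasurableSet (Prod.fst ⁻¹' Metric.ball z ρ : Set (ℝ × ℝ)) :=
    measurable_fst measurableSet_ball
  have htube : ∀ w ∈ W, crect α β n (cw β b w) (cw α a w) ⊆ Prod.fst ⁻¹' Metric.ball z ρ := by
    intro w hw p hp
    obtain ⟨q, hq1, hq2⟩ := hW w hw
    simp only [Set.mem_preimage, Metric.mem_ball, Real.dist_eq] at hq1 ⊢
    obtain ⟨⟨e1, e2⟩, _⟩ := hp
    obtain ⟨⟨e3, e4⟩, _⟩ := hq2
    have habs : |p.1 - q.1| ≤ β ^ n := abs_le.2 ⟨by linarith, by linarith⟩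
    calc |p.1 - z| = |(p.1 - q.1) + (q.1 - z)| := by ring_nf
      _ ≤ |p.1 - q.1| + |q.1 - z| := abs_add_le _ _
      _ < β ^ n + r := add_lt_add_of_le_of_lt habs hq1
      _ = ρ := by rw [hρdef]; ring
  have hsum : ∑ w ∈ W, μ (crect α β n (cw β b w) (cw α a w)) ≤
      9 * μ (Prod.fst ⁻¹' Metric.ball z ρ) := by
    calc ∑ w ∈ W, μ (crect α β n (cw β b w) (cw α a w))
        = ∑ w ∈ W, ∫⁻ p, (crect α β n (cw β b w) (cw α a w)).indicator 1 p ∂μ :=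
          Finset.sum_congr rfl fun w _ => (lintegral_indicator_one (hmeasC w)).symm
      _ = ∫⁻ p, ∑ w ∈ W, (crect α β n (cw β b w) (cw α a w)).indicator 1 p ∂μ :=
          (lintegral_finset_sum W fun w _ => measurable_const.indicator (hmeasC w)).symm
      _ ≤ ∫⁻ p, (9 : ENNReal) * (Prod.fst ⁻¹' Metric.ball z ρ : Set (ℝ × ℝ)).indicator 1 p ∂μ := by
          apply lintegral_mono
          intro p
          dsimp only
          by_cases hp : p ∈ (Prod.fst ⁻¹' Metric.ball z ρ : Set (ℝ × ℝ))
          · rw [Set.indicator_of_mem hp, Pi.one_apply, mul_one]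
            have hpt : ∑ w ∈ W, (crect α β n (cw β b w) (cw α a w)).indicator
                (1 : ℝ × ℝ → ENNReal) p =
                ((W.filter (fun w => p ∈ crect α β n (cw β b w) (cw α a w))).card : ENNReal) := by
              rw [← Finset.sum_boole]
              exact Finset.sum_congr rfl fun w _ => by
                rw [Set.indicator_apply, Pi.one_apply]
            rw [hpt]
            have h9 : (W.filter (fun w => p ∈ crect α β n (cw β b w) (cw α a w))).card ≤ 9 :=
              mult_le_nine hα hαβ hβ hb ha T hT hsep n p _
                (fun w hw => (Finset.mem_filter.1 hw).2)
            calc ((W.filter (fun w => p ∈ crect α β n (cw β b w) (cw α a w))).card : ENNReal)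
                ≤ ((9 : ℕ) : ENNReal) := Nat.cast_le.2 h9
              _ = 9 := by norm_num
          · rw [Set.indicator_of_notMem hp, mul_zero]
            rw [Finset.sum_eq_zero]
            intro w hw
            rw [Set.indicator_of_notMem (fun hc => hp (htube w hw hc))]
      _ = 9 * μ (Prod.fst ⁻¹' Metric.ball z ρ) := by
          rw [lintegral_const_mul' _ _ (by norm_num), lintegral_indicator_one hmeasT]
  have hlow : (W.card : ENNReal) * ((Fintype.card I : ENNReal) ^ n)⁻¹ ≤
      ∑ w ∈ W, μ (crect α β n (cw β b w) (cw α a w)) := by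
    have := Finset.card_nsmul_le_sum W
      (fun w => μ (crect α β n (cw β b w) (cw α a w)))
      (((Fintype.card I : ENNReal) ^ n)⁻¹)
      (fun w _ => mu_crect α β hα hαβ hβ b a T hT K hsq trivial μ hμ hμK1 n w)
    rwa [nsmul_eq_mul] at this
  have hc0 : ((Fintype.card I : ENNReal) ^ n) ≠ 0 :=
    pow_ne_zero n (by simp [Fintype.card_ne_zero])
  have hctop : ((Fintype.card I : ENNReal) ^ n) ≠ ⊤ := ENNReal.pow_ne_top (by simp)
  calc (W.card : ENNReal)
      = (W.card : ENNReal) * ((Fintype.card I : ENNReal) ^ n)⁻¹ *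
        ((Fintype.card I : ENNReal) ^ n) := by
        rw [mul_assoc, ENNReal.inv_mul_cancel hc0 hctop, mul_one]
    _ ≤ (9 * μ (Prod.fst ⁻¹' Metric.ball z ρ)) * ((Fintype.card I : ENNReal) ^ n) :=
        mul_le_mul_left (hlow.trans hsum) _
    _ = 9 * (Fintype.card I : ENNReal) ^ n * μ (Prod.fst ⁻¹' Metric.ball z ρ) := by ring

end Stmt18Aux

set_option maxHeartbeats 2000000 in
open Stmt18Aux in
theorem stmt18 (I : Type*) [Fintype I] [Nonempty I]
    (α β : ℝ) (hα : 0 < α) (hαβ : α < β) (hβ : β < 1)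
    (b a : I → ℝ) (hb : ∀ i, 0 ≤ b i ∧ b i ≤ 1 - β) (ha : ∀ i, 0 ≤ a i ∧ a i ≤ 1 - α)
    (T : I → ℝ × ℝ → ℝ × ℝ) (hT : ∀ i p, T i p = (β * p.1 + b i, α * p.2 + a i))
    -- the open rectangles `T_i((0,1)²)` are pairwise disjoint
    (hsep : ∀ i j, i ≠ j → Disjoint (T i '' (Set.Ioo (0:ℝ) 1 ×ˢ Set.Ioo (0:ℝ) 1))
      (T j '' (Set.Ioo (0:ℝ) 1 ×ˢ Set.Ioo (0:ℝ) 1)))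
    -- `K` is the attractor
    (K : Set (ℝ × ℝ)) (hK : IsCompact K) (hKne : K.Nonempty) (hKinv : K = ⋃ i, T i '' K)
    -- `μ` is the uniform self-affine measure, `ν` its projection to the `x`-axis
    (μ : Measure (ℝ × ℝ)) [IsProbabilityMeasure μ]
    (hμ : μ = (Fintype.card I : ENNReal)⁻¹ • ∑ i : I, Measure.map (T i) μ)
    (ν : Measure ℝ) (hν : ν = Measure.map Prod.fst μ)
    (s : ℝ) (hs : s = frostmanDim ν)
    (ε : ℝ) (hε : 0 < ε) :
    ∃ C : ℝ, 0 < C ∧ ∀ z ∈ Prod.fst '' K, ∀ r : ℝ, 0 < r → r < 1 →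
      (coverNum r (Prod.fst ⁻¹' Metric.ball z r ∩ K) : ℝ) ≤
        C * (1 / r) ^ (Real.log ((Fintype.card I : ℝ) * β ^ (s - ε)) / Real.log (1 / α)) := by
  classical
  have hβ0 : 0 < β := hα.trans hαβ
  have hα1 : α < 1 := hαβ.trans hβ
  have hsq := attractor_subset α β hα hαβ hβ b a hb ha T hT K hK hKne hKinv
  have hμK1 := muK_eq_one α β hα hαβ hβ b a T hT K hK hKne hKinv μ hμ
  haveI hνprob : IsProbabilityMeasure ν := by
    rw [hν]; exact Measure.isProbabilityMeasure_map measurable_fst.aemeasurable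
  -- the Frostman exponent
  set P : Set ℝ := {t : ℝ | 0 ≤ t ∧ ∃ C : ℝ, 0 < C ∧ ∀ z : ℝ, ∀ r : ℝ, 0 < r → r < 1 →
    (ν (Metric.ball z r)).toReal ≤ C * r ^ t} with hPdef
  have h0P : (0:ℝ) ∈ P := by
    refine ⟨le_refl 0, 1, one_pos, fun z' r' hr hr1 => ?_⟩
    rw [Real.rpow_zero, mul_one]
    calc (ν (Metric.ball z' r')).toReal ≤ (1 : ENNReal).toReal :=
          ENNReal.toReal_mono ENNReal.one_ne_top prob_le_one
      _ = 1 := ENNReal.toReal_one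
  have hsP : frostmanDim ν = sSup P := rfl
  obtain ⟨t, htP, hst⟩ : ∃ t ∈ P, s - ε < t := by
    apply exists_lt_of_lt_csSup ⟨0, h0P⟩
    rw [← hsP, ← hs]; linarith
  obtain ⟨ht0, C₀, hC₀pos, hC₀⟩ := htP
  have hFrost : ∀ (z' ρ : ℝ), 0 < ρ → ρ ≤ 2 →
      (ν (Metric.ball z' ρ)).toReal ≤ (C₀ + 1) * ρ ^ t := by
    intro z' ρ hρ0 hρ2
    rcases lt_or_ge ρ 1 with h1 | h1
    · calc (ν (Metric.ball z' ρ)).toReal ≤ C₀ * ρ ^ t := hC₀ z' ρ hρ0 h1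
        _ ≤ (C₀ + 1) * ρ ^ t := by
            have := Real.rpow_nonneg hρ0.le t
            nlinarith
    · have h2 : (1:ℝ) ≤ ρ ^ t := Real.one_le_rpow h1 ht0
      calc (ν (Metric.ball z' ρ)).toReal ≤ (1 : ENNReal).toReal :=
            ENNReal.toReal_mono ENNReal.one_ne_top prob_le_one
        _ = 1 := ENNReal.toReal_one
        _ ≤ (C₀ + 1) * ρ ^ t := by nlinarith
  -- constants
  set mR : ℝ := (Fintype.card I : ℝ) with hmRdef
  have hmR1 : (1:ℝ) ≤ mR := by
    rw [hmRdef]; exact_mod_cast Fintype.card_pos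
  set y : ℝ := β ^ (s - ε) with hydef
  have hy0 : 0 < y := Real.rpow_pos_of_pos hβ0 _
  set x : ℝ := mR * y with hxdef
  have hx0 : 0 < x := by positivity
  set E : ℝ := Real.log x / Real.log (1 / α) with hEdef
  set cmax : ℝ := max 1 x⁻¹ with hcmaxdef
  have hcmax1 : (1:ℝ) ≤ cmax := le_max_left _ _
  refine ⟨18 * mR * (C₀ + 1) * 2 ^ t * cmax, by positivity, ?_⟩
  intro z hz r hr0 hr1
  -- choose the scale k
  obtain ⟨k, hk1, hk2⟩ : ∃ k : ℕ, α ^ (k + 1) ≤ r ∧ r < α ^ k := by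
    have hex : ∃ k : ℕ, α ^ (k + 1) ≤ r := by
      obtain ⟨k, hk⟩ := exists_pow_lt_of_lt_one hr0 hα1
      exact ⟨k, le_of_lt (lt_of_le_of_lt
        (pow_le_pow_of_le_one hα.le hα1.le (Nat.le_succ k)) hk)⟩
    refine ⟨Nat.find hex, Nat.find_spec hex, ?_⟩
    rcases Nat.eq_zero_or_pos (Nat.find hex) with h0 | hpos
    · rw [h0, pow_zero]; exact hr1
    · obtain ⟨j, hj⟩ := Nat.exists_eq_succ_of_ne_zero hpos.ne'
      have hmin := Nat.find_min hex (m := j) (by omega)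
      push_neg at hmin
      rw [hj]
      exact hmin
  set n := k + 1 with hndef
  have hαn_r : α ^ n ≤ r := hk1
  set W := Finset.univ.filter (fun w : Fin n → I =>
    (Prod.fst ⁻¹' Metric.ball z r ∩ crect α β n (cw β b w) (cw α a w)).Nonempty) with hWdef
  -- Step A : coverNum ≤ 2 * W.card
  have covle : (coverNum r (Prod.fst ⁻¹' Metric.ball z r ∩ K) : ℝ) ≤ 2 * W.card := by
    set F : (Fin n → I) × Bool → ℝ × ℝ := fun we =>
      (if we.2 then z + r/2 else z - r/2, cw α a we.1 + α ^ n / 2) with hFdef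
    set Scov := (W ×ˢ (Finset.univ : Finset Bool)).image F with hScovdef
    have hcov : Prod.fst ⁻¹' Metric.ball z r ∩ K ⊆ ⋃ c ∈ Scov, Metric.ball c r := by
      rintro p ⟨hp1, hp2⟩
      obtain ⟨w, hw⟩ := Set.mem_iUnion.1
        (coverage α β hα hαβ hβ b a hb ha T hT K hK hKne hKinv n hp2)
      have hwW : w ∈ W := Finset.mem_filter.2 ⟨Finset.mem_univ _, ⟨p, hp1, hw⟩⟩
      have hp1' : |p.1 - z| < r := by
        simpa [Real.dist_eq] using hp1
      obtain ⟨⟨_, _⟩, hd1, hd2⟩ := hw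
      have hy2 : |p.2 - (cw α a w + α ^ n / 2)| ≤ r / 2 := by
        have hαn0 : (0:ℝ) < α ^ n := pow_pos hα n
        rw [abs_le]
        constructor <;> linarith
      obtain ⟨ha1, ha2⟩ := abs_lt.1 hp1'
      obtain ⟨hb1, hb2⟩ := abs_le.1 hy2
      rcases le_or_gt p.1 z with hle | hlt
      · refine Set.mem_iUnion₂.2 ⟨(z - r/2, cw α a w + α ^ n / 2), Finset.mem_image.2
          ⟨(w, false), Finset.mem_product.2 ⟨hwW, Finset.mem_univ _⟩, by
            simp [hFdef]⟩, ?_⟩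
        rw [Metric.mem_ball, Prod.dist_eq]
        apply max_lt <;> rw [Real.dist_eq] <;> simp only <;> rw [abs_lt] <;>
          constructor <;> linarith
      · refine Set.mem_iUnion₂.2 ⟨(z + r/2, cw α a w + α ^ n / 2), Finset.mem_image.2
          ⟨(w, true), Finset.mem_product.2 ⟨hwW, Finset.mem_univ _⟩, by
            simp [hFdef]⟩, ?_⟩
        rw [Metric.mem_ball, Prod.dist_eq]
        apply max_lt <;> rw [Real.dist_eq] <;> simp only <;> rw [abs_lt] <;>
          constructor <;> linarith
    have h1 : coverNum r (Prod.fst ⁻¹' Metric.ball z r ∩ K) ≤ Scov.card :=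
      Nat.sInf_le ⟨Scov, rfl, hcov⟩
    have h2 : Scov.card ≤ W.card * 2 := by
      calc Scov.card ≤ (W ×ˢ (Finset.univ : Finset Bool)).card := Finset.card_image_le
        _ = W.card * 2 := by rw [Finset.card_product, Finset.card_univ, Fintype.card_bool]
    calc (coverNum r (Prod.fst ⁻¹' Metric.ball z r ∩ K) : ℝ) ≤ (Scov.card : ℝ) :=
          Nat.cast_le.2 h1
      _ ≤ (W.card * 2 : ℕ) := Nat.cast_le.2 h2
      _ = 2 * W.card := by push_cast; ring
  -- Step B : W.card bound
  have hWcard : (W.card : ℝ) ≤ 9 * mR ^ n * (ν (Metric.ball z (r + β ^ n))).toReal := by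
    have hEN := card_W_le α β hα hαβ hβ b a hb ha T hT hsep K hsq μ hμ hμK1 n z r W
      (fun w hw => (Finset.mem_filter.1 hw).2)
    have hμtube : μ (Prod.fst ⁻¹' Metric.ball z (r + β ^ n)) =
        ν (Metric.ball z (r + β ^ n)) := by
      rw [hν, Measure.map_apply measurable_fst measurableSet_ball]
    rw [hμtube] at hEN
    have hfin : (9 * (Fintype.card I : ENNReal) ^ n * ν (Metric.ball z (r + β ^ n))) ≠ ⊤ :=
      ENNReal.mul_ne_top (ENNReal.mul_ne_top (by norm_num) (ENNReal.pow_ne_top (by simp)))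
        (measure_ne_top ν _)
    have h2 := ENNReal.toReal_mono hfin hEN
    rw [ENNReal.toReal_mul, ENNReal.toReal_mul, ENNReal.toReal_pow] at h2
    have e9 : ((9 : ENNReal)).toReal = (9:ℝ) := rfl
    have ec : ((Fintype.card I : ENNReal)).toReal = mR := rfl
    have ew : ((W.card : ENNReal)).toReal = (W.card : ℝ) := rfl
    rw [e9, ec, ew] at h2
    exact h2
  -- Step C : Frostman estimate
  have hρpos : (0:ℝ) < r + β ^ n := by positivity
  have hβn1 : β ^ n ≤ 1 := pow_le_one₀ hβ0.le hβ.le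
  have hρle : r + β ^ n ≤ 2 * β ^ k := by
    have h1 : r < β ^ k := lt_of_lt_of_le hk2 (pow_le_pow_left₀ hα.le hαβ.le k)
    have h2 : β ^ n ≤ β ^ k := by
      rw [hndef, pow_succ]
      nlinarith [pow_pos hβ0 k]
    linarith
  have hνbound : (ν (Metric.ball z (r + β ^ n))).toReal ≤ (C₀ + 1) * (2 ^ t * y ^ k) := by
    have hβk0 : (0:ℝ) < β ^ k := pow_pos hβ0 k
    calc (ν (Metric.ball z (r + β ^ n))).toReal ≤ (C₀ + 1) * (r + β ^ n) ^ t :=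
          hFrost z (r + β ^ n) hρpos (by nlinarith)
      _ ≤ (C₀ + 1) * (2 * β ^ k) ^ t :=
          mul_le_mul_of_nonneg_left (Real.rpow_le_rpow hρpos.le hρle ht0)
            (by linarith)
      _ = (C₀ + 1) * (2 ^ t * (β ^ k) ^ t) := by
          rw [Real.mul_rpow (by norm_num) hβk0.le]
      _ ≤ (C₀ + 1) * (2 ^ t * (β ^ k) ^ (s - ε)) := by
          have h1 : (β ^ k) ^ t ≤ (β ^ k) ^ (s - ε) :=
            Real.rpow_le_rpow_of_exponent_ge hβk0 (pow_le_one₀ hβ0.le hβ.le) hst.le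
          have h2 : (0:ℝ) < 2 ^ t := Real.rpow_pos_of_pos (by norm_num) t
          exact mul_le_mul_of_nonneg_left
            (mul_le_mul_of_nonneg_left h1 h2.le) (by linarith)
      _ = (C₀ + 1) * (2 ^ t * y ^ k) := by
          congr 2
          rw [← Real.rpow_natCast β k, ← Real.rpow_mul hβ0.le, mul_comm,
            Real.rpow_mul hβ0.le, Real.rpow_natCast]
  -- Step D/E : power counting
  have hmRn : mR ^ n * y ^ k = mR * x ^ k := by
    rw [hndef, pow_succ, hxdef, mul_pow]; ring
  have hlogα : 0 < Real.log (1 / α) := by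
    apply Real.log_pos
    rw [lt_div_iff₀ hα]; linarith
  have hkL : (k : ℝ) < Real.log (1 / r) / Real.log (1 / α) := by
    rw [lt_div_iff₀ hlogα]
    have h1 : Real.log r < Real.log (α ^ k) := Real.log_lt_log hr0 hk2
    rw [Real.log_pow] at h1
    rw [one_div, one_div, Real.log_inv, Real.log_inv]
    linarith [h1, (by ring : (k:ℝ) * -Real.log α = -((k:ℝ) * Real.log α))]
  have hLk : Real.log (1 / r) / Real.log (1 / α) ≤ (k : ℝ) + 1 := by
    rw [div_le_iff₀ hlogα]
    have h1 : Real.log (α ^ (k + 1)) ≤ Real.log r := Real.log_le_log (pow_pos hα _) hk1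
    rw [Real.log_pow] at h1
    rw [one_div, one_div, Real.log_inv, Real.log_inv]
    push_cast at h1 ⊢
    linarith [h1, (by ring : ((k:ℝ) + 1) * -Real.log α = -(((k:ℝ) + 1) * Real.log α))]
  set L : ℝ := Real.log (1 / r) / Real.log (1 / α) with hLdef
  have hxL : x ^ L = (1 / r) ^ E := by
    rw [Real.rpow_def_of_pos hx0, Real.rpow_def_of_pos (by positivity : (0:ℝ) < 1 / r),
      hEdef, hLdef]
    congr 1
    ring
  have hxk : x ^ k ≤ cmax * (1 / r) ^ E := by
    rw [← hxL, ← Real.rpow_natCast x k]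
    rcases le_or_gt 1 x with hx1 | hx1
    · calc x ^ (k : ℝ) ≤ x ^ L := Real.rpow_le_rpow_of_exponent_le hx1 hkL.le
        _ ≤ cmax * x ^ L := le_mul_of_one_le_left (Real.rpow_nonneg hx0.le L) hcmax1
    · calc x ^ (k : ℝ) ≤ x ^ (L - 1) :=
            Real.rpow_le_rpow_of_exponent_ge hx0 hx1.le (by linarith)
        _ = x ^ L * x⁻¹ := by
            rw [Real.rpow_sub hx0, Real.rpow_one, div_eq_mul_inv]
        _ ≤ cmax * x ^ L := by
            rw [mul_comm]
            exact mul_le_mul_of_nonneg_right (le_max_right _ _)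
              (Real.rpow_nonneg hx0.le L)
  -- assemble
  have h2t : (0:ℝ) < 2 ^ t := Real.rpow_pos_of_pos (by norm_num) t
  have hmRn0 : (0:ℝ) < mR ^ n := by positivity
  calc (coverNum r (Prod.fst ⁻¹' Metric.ball z r ∩ K) : ℝ)
      ≤ 2 * W.card := covle
    _ ≤ 2 * (9 * mR ^ n * (ν (Metric.ball z (r + β ^ n))).toReal) := by linarith
    _ ≤ 2 * (9 * mR ^ n * ((C₀ + 1) * (2 ^ t * y ^ k))) := by
        have := mul_le_mul_of_nonneg_left hνbound (by positivity : (0:ℝ) ≤ 9 * mR ^ n)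
        linarith
    _ = 18 * (C₀ + 1) * 2 ^ t * (mR ^ n * y ^ k) := by ring
    _ = 18 * (C₀ + 1) * 2 ^ t * mR * x ^ k := by rw [hmRn]; ring
    _ ≤ 18 * (C₀ + 1) * 2 ^ t * mR * (cmax * (1 / r) ^ E) := by
        apply mul_le_mul_of_nonneg_left hxk
        positivity
    _ = 18 * mR * (C₀ + 1) * 2 ^ t * cmax * (1 / r) ^ E := by ring
end
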